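/- arXiv:2208.08260 — 5 statements merged into one kernel-verified Lean document; each statement's English description precedes it below -/
import Mathlib

section
/- Let λ > 0, t0 > 0, and let z : [t0, ∞) → H be a continuously differentiable curve such that v(t) := ∇f(z(t)) is differentiable on [t0, ∞) and the regularized Newton system λ·ż(t) + v̇(t) + v(t) = 0 holds for all t ≥ t0. Then ∫_{t0}^∞ (f(z(t)) − inf_H f) dt < ∞, and f(z(t)) − inf_H f = o(1/t) as t → ∞, i.e., t·(f(z(t)) − inf_H f) → 0 as t → ∞. -/
open MeasureTheory Filter Set
open scoped Topology RealInnerProductSpace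

/-- First-order condition for a convex function with a gradient. -/
private lemma grad_foc {H : Type*} [NormedAddCommGroup H] [InnerProductSpace ℝ H]
    [CompleteSpace H] {f : H → ℝ} {f' : H → H} (hconv : ConvexOn ℝ Set.univ f)
    (hgrad : ∀ x, HasGradientAt f (f' x) x) (x y : H) :
    f x + ⟪f' x, y - x⟫ ≤ f y := by
  have hg : HasDerivAt (fun t : ℝ => f (x + t • (y - x))) ⟪f' x, y - x⟫ 0 := by
    have hc : HasDerivAt (fun t : ℝ => x + t • (y - x)) (y - x) 0 := by
      simpa using ((hasDerivAt_id (0 : ℝ)).smul_const (y - x)).const_add x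
    have hfd : HasFDerivAt f (InnerProductSpace.toDual ℝ H (f' x))
        (x + (0 : ℝ) • (y - x)) := by
      simpa using (hgrad x).hasFDerivAt
    simpa [InnerProductSpace.toDual_apply_apply, Function.comp_def] using hfd.comp_hasDerivAt 0 hc
  have hslope : ∀ t ∈ Ioo (0 : ℝ) 1,
      slope (fun t : ℝ => f (x + t • (y - x))) 0 t ≤ f y - f x := by
    intro t ht
    have hcvx := hconv.2 (mem_univ x) (mem_univ y)
      (by linarith [ht.1, ht.2] : (0 : ℝ) ≤ 1 - t) ht.1.le (by ring)
    have hxy : x + t • (y - x) = (1 - t) • x + t • y := by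
      rw [smul_sub, sub_smul, one_smul]; abel
    have h1 : f (x + t • (y - x)) ≤ (1 - t) * f x + t * f y := by
      rw [hxy]; simpa using hcvx
    rw [slope_def_field]
    have h0 : x + (0 : ℝ) • (y - x) = x := by simp
    rw [h0, sub_zero, div_le_iff₀ ht.1]
    nlinarith [ht.1]
  have hlim : Tendsto (slope (fun t : ℝ => f (x + t • (y - x))) 0) (𝓝[>] 0)
      (𝓝 ⟪f' x, y - x⟫) :=
    (hasDerivAt_iff_tendsto_slope.mp hg).mono_left
      (nhdsWithin_mono _ (fun u hu => ne_of_gt hu))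
  have hle : ⟪f' x, y - x⟫ ≤ f y - f x := by
    refine le_of_tendsto hlim ?_
    filter_upwards [Ioo_mem_nhdsGT_of_mem (by norm_num : (0:ℝ) ∈ Ico (0:ℝ) 1)] with t ht
    exact hslope t ht
  linarith

/-- Monotonicity of the gradient of a convex function. -/
private lemma grad_mono {H : Type*} [NormedAddCommGroup H] [InnerProductSpace ℝ H]
    [CompleteSpace H] {f : H → ℝ} {f' : H → H} (hconv : ConvexOn ℝ Set.univ f)
    (hgrad : ∀ x, HasGradientAt f (f' x) x) (x y : H) :
    0 ≤ ⟪f' x - f' y, x - y⟫ := by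
  have h1 := grad_foc hconv hgrad x y
  have h2 := grad_foc hconv hgrad y x
  simp only [inner_sub_left, inner_sub_right] at h1 h2 ⊢
  linarith

/-- Regularized Newton dynamics: integral estimate and o(1/t) convergence of the values. -/
theorem regularized_newton_value_estimates
    {H : Type*} [NormedAddCommGroup H] [InnerProductSpace ℝ H] [CompleteSpace H]
    (f : H → ℝ) (f' : H → H)
    (hconv : ConvexOn ℝ Set.univ f)
    (hgrad : ∀ x, HasGradientAt f (f' x) x)
    (hlip : ∀ s : Set H, Bornology.IsBounded s → ∃ K : NNReal, LipschitzOnWith K f' s)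
    (hmin : ∃ z, ∀ y, f z ≤ f y)
    (lam t0 : ℝ) (hlam : 0 < lam) (ht0 : 0 < t0)
    (z z' v' : ℝ → H)
    (hz : ∀ t ∈ Ici t0, HasDerivAt z (z' t) t)
    (hz'cont : ContinuousOn z' (Ici t0))
    (hv : ∀ t ∈ Ici t0, HasDerivAt (fun u => f' (z u)) (v' t) t)
    (heq : ∀ t ∈ Ici t0, lam • z' t + v' t + f' (z t) = 0) :
    IntegrableOn (fun t => f (z t) - ⨅ x, f x) (Ici t0) ∧
    Tendsto (fun t => t * (f (z t) - ⨅ x, f x)) atTop (nhds 0) := by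
  obtain ⟨xs, hxs⟩ := hmin
  have hfs : (⨅ x, f x) = f xs :=
    le_antisymm (ciInf_le ⟨f xs, forall_mem_range.2 hxs⟩ xs) (le_ciInf hxs)
  set φ : ℝ → ℝ := fun t => f (z t) - ⨅ x, f x with hφdef
  have hφ_eq : ∀ t, φ t = f (z t) - f xs := fun t => by rw [hφdef]; simp [hfs]
  have hφnonneg : ∀ t, 0 ≤ φ t := fun t => by rw [hφ_eq]; linarith [hxs (z t)]
  -- derivative of φ
  have hφderiv : ∀ t ∈ Ici t0, HasDerivAt φ ⟪f' (z t), z' t⟫ t := by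
    intro t ht
    have h1 : HasFDerivAt f (InnerProductSpace.toDual ℝ H (f' (z t))) (z t) :=
      (hgrad (z t)).hasFDerivAt
    have h2 := h1.comp_hasDerivAt t (hz t ht)
    simpa [hφdef, InnerProductSpace.toDual_apply_apply, Function.comp] using h2.sub_const (⨅ x, f x)
  -- monotonicity of the gradient along the trajectory
  have hinner_nonneg : ∀ t ∈ Ici t0, 0 ≤ ⟪v' t, z' t⟫ := by
    intro t ht
    have h1 := hasDerivAt_iff_tendsto_slope.mp (hv t ht)
    have h2 := hasDerivAt_iff_tendsto_slope.mp (hz t ht)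
    have h3 : Tendsto (fun s => ⟪slope (fun u => f' (z u)) t s, slope z t s⟫)
        (𝓝[≠] t) (𝓝 ⟪v' t, z' t⟫) := h1.inner h2
    refine ge_of_tendsto h3 ?_
    filter_upwards [self_mem_nhdsWithin] with s hs
    rw [slope_def_module, slope_def_module, real_inner_smul_left, real_inner_smul_right]
    have hm := grad_mono hconv hgrad (z s) (z t)
    nlinarith [sq_nonneg ((s - t)⁻¹)]
  -- consequence of the equation
  have hv'val : ∀ t ∈ Ici t0, v' t = -(lam • z' t) - f' (z t) := by
    intro t ht
    have h := heq t ht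
    rw [add_assoc] at h
    exact eq_sub_of_add_eq (eq_neg_of_add_eq_zero_right h)
  have hfz : ∀ t ∈ Ici t0, f' (z t) = -(lam • z' t) - v' t := by
    intro t ht
    have h := hv'val t ht
    rw [h]; abel
  have hφderiv_nonpos : ∀ t ∈ Ici t0, ⟪f' (z t), z' t⟫ ≤ 0 := by
    intro t ht
    have h2 : (0 : ℝ) ≤ ⟪z' t, z' t⟫ := real_inner_self_nonneg
    have h3 := hinner_nonneg t ht
    rw [hfz t ht]
    simp only [inner_sub_left, inner_neg_left, real_inner_smul_left]
    nlinarith [mul_nonneg hlam.le h2]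
  -- continuity
  have hfc : Continuous f :=
    continuous_iff_continuousAt.2 fun x => (hgrad x).differentiableAt.continuousAt
  have hzc : ContinuousOn z (Ici t0) := fun t ht => (hz t ht).continuousAt.continuousWithinAt
  have hvc : ContinuousOn (fun u => f' (z u)) (Ici t0) := fun t ht =>
    (hv t ht).continuousAt.continuousWithinAt
  have hφc : ContinuousOn φ (Ici t0) := (hfc.comp_continuousOn hzc).sub continuousOn_const
  -- the function ψ = -W'
  set ψ : ℝ → ℝ := fun t => ⟪f' (z t), z t - xs⟫ - ⟪f' (z t), z' t⟫ with hψdef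
  have hψc : ContinuousOn ψ (Ici t0) :=
    (hvc.inner (hzc.sub continuousOn_const)).sub (hvc.inner hz'cont)
  have hfoc' : ∀ t, φ t ≤ ⟪f' (z t), z t - xs⟫ := by
    intro t
    have h := grad_foc hconv hgrad (z t) xs
    rw [hφ_eq]
    simp only [inner_sub_right] at h ⊢
    linarith
  have hφ_le_ψ : ∀ t ∈ Ici t0, φ t ≤ ψ t := by
    intro t ht
    have h1 := hfoc' t
    have h2 := hφderiv_nonpos t ht
    rw [hψdef]; dsimp only; linarith
  -- the Lyapunov function W
  set W : ℝ → ℝ := fun t => lam / 2 * ⟪z t - xs, z t - xs⟫ + ⟪f' (z t), z t - xs⟫ with hWdef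
  have hWderiv : ∀ t ∈ Ici t0, HasDerivAt W (-ψ t) t := by
    intro t ht
    have hz1 : HasDerivAt (fun u => z u - xs) (z' t) t := (hz t ht).sub_const xs
    have hA : HasDerivAt (fun u => ⟪z u - xs, z u - xs⟫)
        (⟪z t - xs, z' t⟫ + ⟪z' t, z t - xs⟫) t := hz1.inner ℝ hz1
    have hB : HasDerivAt (fun u => ⟪f' (z u), z u - xs⟫)
        (⟪f' (z t), z' t⟫ + ⟪v' t, z t - xs⟫) t := (hv t ht).inner ℝ hz1
    have hW1 := (hA.const_mul (lam / 2)).add hB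
    convert hW1 using 1
    · rfl
    · rfl
    · rfl
    have e1 : ⟪v' t, z t - xs⟫ = -(lam * ⟪z' t, z t - xs⟫) - ⟪f' (z t), z t - xs⟫ := by
      rw [hv'val t ht]
      simp [inner_sub_left, inner_neg_left, real_inner_smul_left]
    have hcomm : ⟪z t - xs, z' t⟫ = ⟪z' t, z t - xs⟫ := real_inner_comm _ _
    rw [hψdef]; dsimp only
    rw [e1, hcomm]; ring
  have hWnonneg : ∀ t ∈ Ici t0, 0 ≤ W t := by
    intro t ht
    have h1 : (0 : ℝ) ≤ ⟪z t - xs, z t - xs⟫ := real_inner_self_nonneg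
    have h2 := le_trans (hφnonneg t) (hfoc' t)
    rw [hWdef]; dsimp only
    nlinarith
  -- integral bound
  have hbound : ∀ T, t0 ≤ T → ∫ s in t0..T, φ s ≤ W t0 := by
    intro T hT
    have hsub : Icc t0 T ⊆ Ici t0 := Icc_subset_Ici_self
    have hφint : IntervalIntegrable φ volume t0 T :=
      (hφc.mono hsub).intervalIntegrable_of_Icc hT
    have hψint : IntervalIntegrable ψ volume t0 T :=
      (hψc.mono hsub).intervalIntegrable_of_Icc hT
    have hmono := intervalIntegral.integral_mono_on hT hφint hψint
      (fun s hs => hφ_le_ψ s (hsub hs))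
    have hftc : ∫ s in t0..T, -ψ s = W T - W t0 := by
      apply intervalIntegral.integral_eq_sub_of_hasDerivAt
      · intro s hs
        rw [uIcc_of_le hT] at hs
        exact hWderiv s (hsub hs)
      · exact hψint.neg
    rw [intervalIntegral.integral_neg] at hftc
    have hWT := hWnonneg T hT
    linarith
  -- integrability on Ici t0
  have hIoi : IntegrableOn φ (Ioi t0) := by
    apply integrableOn_Ioi_of_intervalIntegral_norm_bounded (W t0) t0 ?_ tendsto_id
    · filter_upwards [eventually_ge_atTop t0] with i hi
      have hcongr : ∫ x in t0..i, ‖φ x‖ = ∫ x in t0..i, φ x := by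
        apply intervalIntegral.integral_congr
        intro s hs
        exact Real.norm_of_nonneg (hφnonneg s)
      simp only [id]; rw [hcongr]; exact hbound i hi
    · intro i
      rcases le_or_gt i t0 with h | h
      · simp only [id]; rw [Ioc_eq_empty (not_lt.2 h)]; exact integrableOn_empty
      · exact ((hφc.mono (Icc_subset_Ici_self (a := i) (b := t0))).integrableOn_Icc).mono_set
          Ioc_subset_Icc_self
  have hInt : IntegrableOn φ (Ici t0) := (integrableOn_Ici_iff_integrableOn_Ioi (by simp)).2 hIoi
  refine ⟨hInt, ?_⟩
  -- antitonicity of φ on Ici t0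
  have hanti : AntitoneOn φ (Ici t0) := by
    apply antitoneOn_of_deriv_nonpos (convex_Ici t0) hφc
    · intro s hs
      rw [interior_Ici] at hs
      exact (hφderiv s (mem_Ici.2 (le_of_lt hs))).differentiableAt.differentiableWithinAt
    · intro s hs
      rw [interior_Ici] at hs
      rw [(hφderiv s (mem_Ici.2 (le_of_lt hs))).deriv]
      exact hφderiv_nonpos s (mem_Ici.2 (le_of_lt hs))
  -- limit via squeeze
  set F : ℝ → ℝ := fun b => ∫ s in t0..b, φ s with hFdef
  have hFlim : Tendsto F atTop (𝓝 (∫ s in Ioi t0, φ s)) :=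
    intervalIntegral_tendsto_integral_Ioi t0 hIoi tendsto_id
  have hhalf : Tendsto (fun t : ℝ => t / 2) atTop atTop :=
    tendsto_id.atTop_div_const (by norm_num)
  have hFlim2 : Tendsto (fun t => F (t / 2)) atTop (𝓝 (∫ s in Ioi t0, φ s)) :=
    hFlim.comp hhalf
  have hdiff : Tendsto (fun t => 2 * (F t - F (t / 2))) atTop (𝓝 0) := by
    have h := (hFlim.sub hFlim2).const_mul 2
    simpa using h
  refine squeeze_zero' ?_ ?_ hdiff
  · filter_upwards [eventually_ge_atTop (0 : ℝ)] with t ht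
    exact mul_nonneg ht (hφnonneg t)
  · filter_upwards [eventually_ge_atTop (2 * t0)] with t ht
    have ht2 : t0 ≤ t / 2 := by linarith
    have ht1 : t / 2 ≤ t := by linarith [ht0]
    have htt : t0 ≤ t := le_trans ht2 ht1
    have hsub1 : Icc (t / 2) t ⊆ Ici t0 := fun s hs => le_trans ht2 hs.1
    have hint1 : IntervalIntegrable φ volume (t / 2) t :=
      (hφc.mono hsub1).intervalIntegrable_of_Icc ht1
    have hint0 : IntervalIntegrable φ volume t0 (t / 2) :=
      (hφc.mono Icc_subset_Ici_self).intervalIntegrable_of_Icc ht2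
    have hmono2 : ∫ _ in (t / 2)..t, φ t ≤ ∫ s in (t / 2)..t, φ s := by
      apply intervalIntegral.integral_mono_on ht1 intervalIntegrable_const hint1
      intro s hs
      exact hanti (hsub1 hs) htt hs.2
    rw [intervalIntegral.integral_const, smul_eq_mul] at hmono2
    have hsplit : F t - F (t / 2) = ∫ s in (t / 2)..t, φ s := by
      rw [hFdef]; dsimp only
      rw [← intervalIntegral.integral_add_adjacent_intervals hint0 hint1]; ring
    have hkey : t * φ t = 2 * ((t - t / 2) * φ t) := by ring
    rw [hkey, hsplit]
    linarith
end

section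
/- Let f : H → ℝ be convex and lower semicontinuous with argmin_H f nonempty, and let α > 1. Define the step sizes by s_0 = 0 and s_{k+1} = (α − 1 + √((α−1)² + 4s_k²))/2 for k ≥ 0 (equivalently, s_{k+1} > 0 and s_{k+1}² − (α−1)s_{k+1} = s_k²). Let (y_k)_{k≥0} ⊆ H and (η_k)_{k≥1} ⊆ H be sequences such that for every k ≥ 0, η_{k+1} is a subgradient of f at y_{k+1} (i.e., f(z) ≥ f(y_{k+1}) + ⟨η_{k+1}, z − y_{k+1}⟩ for all z ∈ H) and y_{k+1} = y_k − (s_{k+1}/(α−1))·η_{k+1} (the proximal step y_{k+1} = prox_{(s_{k+1}/(α−1)) f}(y_k)). Then Σ_{k≥0} s_k·(f(y_k) − inf_H f) < ∞ and Σ_{k≥1} s_k²·‖η_k‖² < ∞. -/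
open MeasureTheory Filter Set
open scoped Topology RealInnerProductSpace

/-- Proximal algorithm for nonsmooth convex minimization: summability of weighted function
values and of weighted squared subgradient norms. -/
theorem proximal_algorithm_summability
    {H : Type*} [NormedAddCommGroup H] [InnerProductSpace ℝ H] [CompleteSpace H]
    (f : H → ℝ)
    (hconv : ConvexOn ℝ Set.univ f)
    (hlsc : LowerSemicontinuous f)
    (hmin : ∃ z, ∀ y, f z ≤ f y)
    (α : ℝ) (hα : 1 < α)
    (s : ℕ → ℝ) (hs0 : s 0 = 0)
    (hsrec : ∀ k, s (k + 1)
      = (α - 1 + Real.sqrt ((α - 1) ^ 2 + 4 * (s k) ^ 2)) / 2)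
    (y η : ℕ → H)
    (hsub : ∀ k, ∀ z : H, f (y (k + 1)) + ⟪η (k + 1), z - y (k + 1)⟫ ≤ f z)
    (hstep : ∀ k, y (k + 1) = y k - (s (k + 1) / (α - 1)) • η (k + 1)) :
    Summable (fun k => s k * (f (y k) - ⨅ v, f v)) ∧
    Summable (fun k => (s (k + 1)) ^ 2 * ‖η (k + 1)‖ ^ 2) := by
  obtain ⟨z, hz⟩ := hmin
  have hC : (0:ℝ) < α - 1 := by linarith
  have hF : (⨅ v, f v) = f z := by
    refine le_antisymm (ciInf_le ⟨f z, ?_⟩ z) (le_ciInf hz)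
    rintro x ⟨v, rfl⟩; exact hz v
  have hspos : ∀ k, 0 < s (k + 1) := by
    intro k
    have h1 : 0 ≤ Real.sqrt ((α - 1) ^ 2 + 4 * (s k) ^ 2) := Real.sqrt_nonneg _
    rw [hsrec k]; linarith
  have hEnn : ∀ n, (0:ℝ) ≤ ‖y n - z‖ ^ 2 := fun n => sq_nonneg _
  have hΔnn : ∀ n, (0:ℝ) ≤ f (y n) - f z := fun n => by linarith [hz (y n)]
  -- key one-step inequality
  have key : ∀ k, 2 * (s (k+1) / (α-1)) * (f (y (k+1)) - f z)
      + (s (k+1) / (α-1)) ^ 2 * ‖η (k+1)‖ ^ 2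
      ≤ ‖y k - z‖ ^ 2 - ‖y (k+1) - z‖ ^ 2 := by
    intro k
    set lam := s (k+1) / (α-1) with hlam
    have hlamnn : 0 ≤ lam := div_nonneg (hspos k).le hC.le
    have hyk : y k - z = (y (k+1) - z) + lam • η (k+1) := by
      rw [hstep k]; abel
    have hexp : ‖y k - z‖ ^ 2 = ‖y (k+1) - z‖ ^ 2
        + 2 * (lam * ⟪η (k+1), y (k+1) - z⟫) + lam ^ 2 * ‖η (k+1)‖ ^ 2 := by
      rw [hyk, norm_add_sq_real, real_inner_smul_right, real_inner_comm,
        norm_smul, mul_pow, Real.norm_eq_abs, sq_abs]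
    have hip : f (y (k+1)) - f z ≤ ⟪η (k+1), y (k+1) - z⟫ := by
      have h1 := hsub k z
      have h2 : ⟪η (k+1), z - y (k+1)⟫ = -⟪η (k+1), y (k+1) - z⟫ := by
        rw [← inner_neg_right]; congr 1; abel
      linarith
    have h3 := mul_le_mul_of_nonneg_left hip hlamnn
    linarith [hexp]
  have tele : ∀ n, ∑ k ∈ Finset.range n, (‖y k - z‖ ^ 2 - ‖y (k+1) - z‖ ^ 2)
      ≤ ‖y 0 - z‖ ^ 2 := by
    intro n
    rw [Finset.sum_range_sub' (fun i => ‖y i - z‖ ^ 2) n]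
    linarith [hEnn n]
  constructor
  · rw [hF]
    have hshift : Summable (fun k => s (k+1) * (f (y (k+1)) - f z)) := by
      apply summable_of_sum_range_le
        (c := (α - 1) / 2 * ‖y 0 - z‖ ^ 2)
      · intro k
        exact mul_nonneg (hspos k).le (hΔnn (k+1))
      · intro n
        have hterm : ∀ k, s (k+1) * (f (y (k+1)) - f z)
            ≤ (α - 1) / 2 * (‖y k - z‖ ^ 2 - ‖y (k+1) - z‖ ^ 2) := by
          intro k
          have h1 : 2 * (s (k+1) / (α-1)) * (f (y (k+1)) - f z)
              ≤ ‖y k - z‖ ^ 2 - ‖y (k+1) - z‖ ^ 2 := by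
            have h2 : 0 ≤ (s (k+1) / (α-1)) ^ 2 * ‖η (k+1)‖ ^ 2 :=
              mul_nonneg (sq_nonneg _) (sq_nonneg _)
            linarith [key k]
          have heq : s (k+1) * (f (y (k+1)) - f z)
              = (α - 1) / 2 * (2 * (s (k+1) / (α-1)) * (f (y (k+1)) - f z)) := by
            field_simp
          rw [heq]
          exact mul_le_mul_of_nonneg_left h1 (by linarith)
        calc ∑ k ∈ Finset.range n, s (k+1) * (f (y (k+1)) - f z)
            ≤ ∑ k ∈ Finset.range n,
              (α - 1) / 2 * (‖y k - z‖ ^ 2 - ‖y (k+1) - z‖ ^ 2) :=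
              Finset.sum_le_sum fun k _ => hterm k
          _ = (α - 1) / 2 * ∑ k ∈ Finset.range n,
              (‖y k - z‖ ^ 2 - ‖y (k+1) - z‖ ^ 2) := by
              rw [Finset.mul_sum]
          _ ≤ (α - 1) / 2 * ‖y 0 - z‖ ^ 2 :=
              mul_le_mul_of_nonneg_left (tele n) (by linarith)
    exact (summable_nat_add_iff 1).mp hshift
  · apply summable_of_sum_range_le (c := (α - 1) ^ 2 * ‖y 0 - z‖ ^ 2)
    · intro k
      exact mul_nonneg (sq_nonneg _) (sq_nonneg _)
    · intro n
      have hterm : ∀ k, (s (k+1)) ^ 2 * ‖η (k+1)‖ ^ 2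
          ≤ (α - 1) ^ 2 * (‖y k - z‖ ^ 2 - ‖y (k+1) - z‖ ^ 2) := by
        intro k
        have h1 : (s (k+1) / (α-1)) ^ 2 * ‖η (k+1)‖ ^ 2
            ≤ ‖y k - z‖ ^ 2 - ‖y (k+1) - z‖ ^ 2 := by
          have h2 : 0 ≤ 2 * (s (k+1) / (α-1)) * (f (y (k+1)) - f z) := by
            have := mul_nonneg (div_nonneg (hspos k).le hC.le) (hΔnn (k+1))
            linarith
          linarith [key k]
        have heq : (s (k+1)) ^ 2 * ‖η (k+1)‖ ^ 2
            = (α - 1) ^ 2 * ((s (k+1) / (α-1)) ^ 2 * ‖η (k+1)‖ ^ 2) := by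
          field_simp
        rw [heq]
        exact mul_le_mul_of_nonneg_left h1 (sq_nonneg _)
      calc ∑ k ∈ Finset.range n, (s (k+1)) ^ 2 * ‖η (k+1)‖ ^ 2
          ≤ ∑ k ∈ Finset.range n,
            (α - 1) ^ 2 * (‖y k - z‖ ^ 2 - ‖y (k+1) - z‖ ^ 2) :=
            Finset.sum_le_sum fun k _ => hterm k
        _ = (α - 1) ^ 2 * ∑ k ∈ Finset.range n,
            (‖y k - z‖ ^ 2 - ‖y (k+1) - z‖ ^ 2) := by rw [Finset.mul_sum]
        _ ≤ (α - 1) ^ 2 * ‖y 0 - z‖ ^ 2 :=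
            mul_le_mul_of_nonneg_left (tele n) (sq_nonneg _)
end

section
/- Let f : H → ℝ be convex and lower semicontinuous with argmin_H f nonempty, and let α > 1. Define the step sizes by s_0 = 0 and s_{k+1} = (α − 1 + √((α−1)² + 4s_k²))/2 for k ≥ 0. Let (y_k)_{k≥0} ⊆ H and (η_k)_{k≥1} ⊆ H be sequences such that for every k ≥ 0, η_{k+1} is a subgradient of f at y_{k+1} and y_{k+1} = y_k − (s_{k+1}/(α−1))·η_{k+1}. Then s_k²·(f(y_k) − inf_H f) → 0 as k → ∞ (in particular f(y_k) − inf_H f = o(1/(k+1)²), since s_k ≥ (k+1)(α−1)/2), and (y_k) converges weakly as k → ∞ to some point of S = argmin_H f, i.e., there exists x* ∈ S such that ⟨y_k − x*, v⟩ → 0 as k → ∞ for every v ∈ H. -/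
open MeasureTheory Filter Set
open scoped Topology RealInnerProductSpace

private lemma aux_tendsto_zero (w δ : ℕ → ℝ) (B : ℝ)
    (hw : Monotone w) (hw0 : ∀ k, 0 ≤ w k)
    (hδa : Antitone δ) (hδ0 : ∀ k, 0 ≤ δ k)
    (hδt : Tendsto δ atTop (nhds 0))
    (hB : ∀ N, ∑ k ∈ Finset.range N, (w (k+1) - w k) * δ (k+1) ≤ B) :
    Tendsto (fun k => w k * δ k) atTop (nhds 0) := by
  set c : ℕ → ℝ := fun k => (w (k+1) - w k) * δ (k+1) with hc
  have hc0 : ∀ k, 0 ≤ c k := fun k =>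
    mul_nonneg (sub_nonneg.2 (hw (Nat.le_succ k))) (hδ0 _)
  set P : ℕ → ℝ := fun N => ∑ k ∈ Finset.range N, c k with hPdef
  have hPmono : Monotone P := by
    intro a b hab
    exact Finset.sum_le_sum_of_subset_of_nonneg (Finset.range_subset_range.2 hab)
      (fun i _ _ => hc0 i)
  have hPbdd : BddAbove (Set.range P) := ⟨B, by rintro _ ⟨N, rfl⟩; exact hB N⟩
  set L := ⨆ N, P N with hLdef
  have hPL : Tendsto P atTop (nhds L) := tendsto_atTop_ciSup hPmono hPbdd
  have hPleL : ∀ N, P N ≤ L := fun N => le_ciSup hPbdd N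
  have key : ∀ M N, M ≤ N → (w N - w M) * δ N ≤ P N - P M := by
    intro M N h
    induction N, h using Nat.le_induction with
    | base => simp
    | succ N hMN ih =>
      have h1 : (w (N+1) - w M) * δ (N+1)
          = (w N - w M) * δ (N+1) + c N := by
        simp only [hc]; ring
      have h2 : (w N - w M) * δ (N+1) ≤ (w N - w M) * δ N :=
        mul_le_mul_of_nonneg_left (hδa (Nat.le_succ N)) (sub_nonneg.2 (hw hMN))
      have h3 : P (N+1) = P N + c N := Finset.sum_range_succ _ _
      linarith
  rw [Metric.tendsto_atTop]
  intro ε hε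
  have hM : ∃ M, L - P M < ε/2 := by
    rw [Metric.tendsto_atTop] at hPL
    obtain ⟨M0, hM0⟩ := hPL (ε/2) (by linarith)
    refine ⟨M0, ?_⟩
    have := hM0 M0 le_rfl
    rw [Real.dist_eq] at this
    have := abs_lt.1 this
    linarith [this.1]
  obtain ⟨M, hM⟩ := hM
  have hwm : Tendsto (fun N => w M * δ N) atTop (nhds 0) := by
    simpa using hδt.const_mul (w M)
  rw [Metric.tendsto_atTop] at hwm
  obtain ⟨N1, hN1⟩ := hwm (ε/2) (by linarith)
  refine ⟨max M N1, fun N hN => ?_⟩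
  have hMN : M ≤ N := le_trans (le_max_left _ _) hN
  have h1 := key M N hMN
  have h2 := hN1 N (le_trans (le_max_right _ _) hN)
  rw [Real.dist_eq, sub_zero] at h2 ⊢
  have hnn : 0 ≤ w N * δ N := mul_nonneg (hw0 N) (hδ0 N)
  have hwmd : w M * δ N < ε/2 := by
    have := abs_lt.1 h2; linarith [this.1]
  have hsplit : w N * δ N = w M * δ N + (w N - w M) * δ N := by ring
  rw [abs_of_nonneg hnn]
  have hPM : P N - P M ≤ L - P M := by linarith [hPleL N]
  linarith

/-- Proximal algorithm for nonsmooth convex minimization: o(1/s_k²) convergence of the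
values and weak convergence of the iterates towards a minimizer of `f`. -/
theorem proximal_algorithm_value_rate_and_weak_convergence
    {H : Type*} [NormedAddCommGroup H] [InnerProductSpace ℝ H] [CompleteSpace H]
    (f : H → ℝ)
    (hconv : ConvexOn ℝ Set.univ f)
    (hlsc : LowerSemicontinuous f)
    (hmin : ∃ z, ∀ y, f z ≤ f y)
    (α : ℝ) (hα : 1 < α)
    (s : ℕ → ℝ) (hs0 : s 0 = 0)
    (hsrec : ∀ k, s (k + 1)
      = (α - 1 + Real.sqrt ((α - 1) ^ 2 + 4 * (s k) ^ 2)) / 2)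
    (y η : ℕ → H)
    (hsub : ∀ k, ∀ z : H, f (y (k + 1)) + ⟪η (k + 1), z - y (k + 1)⟫ ≤ f z)
    (hstep : ∀ k, y (k + 1) = y k - (s (k + 1) / (α - 1)) • η (k + 1)) :
    Tendsto (fun k => (s k) ^ 2 * (f (y k) - ⨅ v, f v)) atTop (nhds 0) ∧
    ∃ xstar : H, (∀ v, f xstar ≤ f v) ∧
      ∀ v : H, Tendsto (fun k => ⟪y k - xstar, v⟫) atTop (nhds 0) := by
  obtain ⟨xs, hxs⟩ := hmin
  set ε := α - 1 with hεdef
  have hε : (0:ℝ) < ε := by rw [hεdef]; linarith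
  -- step size facts
  have hslb : ∀ k, ε ≤ s (k+1) := by
    intro k
    rw [hsrec k]
    have h1 : ε ≤ Real.sqrt (ε^2 + 4 * s k^2) := by
      have h2 := Real.sqrt_le_sqrt (by nlinarith [sq_nonneg (s k)] : ε^2 ≤ ε^2 + 4*(s k)^2)
      rwa [Real.sqrt_sq hε.le] at h2
    linarith
  have hs0' : ∀ k, 0 ≤ s k := by
    intro k
    cases k with
    | zero => rw [hs0]
    | succ n => exact le_trans hε.le (hslb n)
  have hsq : ∀ k, s (k+1)^2 = ε * s (k+1) + s k ^ 2 := by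
    intro k
    have hD : (0:ℝ) ≤ ε^2 + 4 * s k^2 := by positivity
    have h1 : Real.sqrt (ε^2 + 4*s k^2) ^ 2 = ε^2 + 4*s k^2 := Real.sq_sqrt hD
    rw [hsrec k]
    linear_combination h1 / 4
  have hlam0 : ∀ k, 0 ≤ s k / ε := fun k => div_nonneg (hs0' k) hε.le
  have hlam1 : ∀ k, 1 ≤ s (k+1) / ε := fun k => (one_le_div hε).2 (hslb k)
  have hslam : ∀ k, s k = ε * (s k / ε) := fun k => by field_simp
  -- the key inequality
  have KEY : ∀ (k : ℕ) (x : H), ‖y (k+1) - x‖^2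
      + 2 * (s (k+1) / ε) * (f (y (k+1)) - f x) ≤ ‖y k - x‖^2 := by
    intro k x
    have hsg : f (y (k+1)) - f x ≤ ⟪y (k+1) - x, η (k+1)⟫ := by
      have h := hsub k x
      have e1 : ⟪η (k+1), x - y (k+1)⟫ = - ⟪y (k+1) - x, η (k+1)⟫ := by
        rw [real_inner_comm]
        simp only [inner_sub_left]
        ring
      rw [e1] at h
      linarith
    have hy : y k - x = (y (k+1) - x) + (s (k+1) / ε) • η (k+1) := by
      rw [hstep k]; abel
    have hnorm : ‖y k - x‖^2 = ‖y (k+1) - x‖^2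
        + 2 * (s (k+1) / ε) * ⟪y (k+1) - x, η (k+1)⟫
        + (s (k+1) / ε)^2 * ‖η (k+1)‖^2 := by
      rw [hy, norm_add_sq_real, real_inner_smul_right, norm_smul,
        Real.norm_eq_abs, mul_pow, sq_abs]
      ring
    have hl : (0:ℝ) ≤ s (k+1) / ε := hlam0 _
    nlinarith [mul_le_mul_of_nonneg_left hsg (by positivity : (0:ℝ) ≤ 2 * (s (k+1) / ε)),
      mul_nonneg (mul_nonneg hl hl) (sq_nonneg ‖η (k+1)‖)]
  -- values decrease
  have hfmono : ∀ k, f (y (k+1)) ≤ f (y k) := by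
    intro k
    have h := hsub k (y k)
    have hy : y k - y (k+1) = (s (k+1) / ε) • η (k+1) := by
      rw [hstep k]; abel
    have e1 : ⟪η (k+1), y k - y (k+1)⟫ = (s (k+1) / ε) * ‖η (k+1)‖^2 := by
      rw [hy, real_inner_smul_right, real_inner_self_eq_norm_sq]
    rw [e1] at h
    nlinarith [mul_nonneg (hlam0 (k+1)) (sq_nonneg ‖η (k+1)‖)]
  have hfanti : Antitone (fun k => f (y k)) := antitone_nat_of_succ_le hfmono
  have hδ0 : ∀ k, 0 ≤ f (y k) - f xs := fun k => sub_nonneg.2 (hxs _)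
  have hδanti : Antitone (fun k => f (y k) - f xs) :=
    fun a b h => sub_le_sub_right (hfanti h) _
  -- Fejér monotonicity w.r.t. any minimizer
  have hranti : ∀ q : H, (∀ v, f q ≤ f v) → Antitone (fun k => ‖y k - q‖^2) := by
    intro q hq
    apply antitone_nat_of_succ_le
    intro k
    have h := KEY k q
    have h1 : 0 ≤ f (y (k+1)) - f q := sub_nonneg.2 (hq _)
    nlinarith [mul_nonneg (hlam0 (k+1)) h1]
  have hrconv : ∀ q : H, (∀ v, f q ≤ f v) →
      ∃ Lq, Tendsto (fun k => ‖y k - q‖^2) atTop (nhds Lq) := by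
    intro q hq
    exact ⟨_, tendsto_atTop_ciInf (hranti q hq)
      ⟨0, fun x hx => by obtain ⟨k, rfl⟩ := hx; positivity⟩⟩
  -- summability of the values
  have hsum : ∀ N, ∑ k ∈ Finset.range N,
      2 * (s (k+1) / ε) * (f (y (k+1)) - f xs) ≤ ‖y 0 - xs‖^2 := by
    intro N
    have h1 : ∀ k ∈ Finset.range N, 2 * (s (k+1) / ε) * (f (y (k+1)) - f xs)
        ≤ ‖y k - xs‖^2 - ‖y (k+1) - xs‖^2 := by
      intro k _
      have := KEY k xs
      linarith
    calc ∑ k ∈ Finset.range N, 2 * (s (k+1) / ε) * (f (y (k+1)) - f xs)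
        ≤ ∑ k ∈ Finset.range N, (‖y k - xs‖^2 - ‖y (k+1) - xs‖^2) :=
          Finset.sum_le_sum h1
      _ = ‖y 0 - xs‖^2 - ‖y N - xs‖^2 := Finset.sum_range_sub' _ _
      _ ≤ ‖y 0 - xs‖^2 := by nlinarith [sq_nonneg ‖y N - xs‖]
  have hδsum : Summable (fun k => f (y (k+1)) - f xs) := by
    apply summable_of_sum_range_le (c := ‖y 0 - xs‖^2) (fun n => hδ0 _)
    intro N
    calc ∑ k ∈ Finset.range N, (f (y (k+1)) - f xs)
        ≤ ∑ k ∈ Finset.range N, 2 * (s (k+1) / ε) * (f (y (k+1)) - f xs) := by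
          apply Finset.sum_le_sum
          intro k _
          nlinarith [hlam1 k, hδ0 (k+1)]
      _ ≤ ‖y 0 - xs‖^2 := hsum N
  have hδt : Tendsto (fun k => f (y k) - f xs) atTop (nhds 0) :=
    (tendsto_add_atTop_iff_nat 1).1 hδsum.tendsto_atTop_zero
  have hinf : (⨅ v, f v) = f xs := by
    apply le_antisymm
    · exact ciInf_le ⟨f xs, by rintro _ ⟨v, rfl⟩; exact hxs v⟩ xs
    · exact le_ciInf hxs
  constructor
  · -- value rate
    have hfun : (fun k => s k ^ 2 * (f (y k) - ⨅ v, f v))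
        = fun k => s k ^ 2 * (f (y k) - f xs) := by
      funext k; rw [hinf]
    rw [hfun]
    have hwmono : Monotone (fun k => s k ^ 2) := by
      apply monotone_nat_of_le_succ
      intro k
      have h1 := hsq k
      have h2 := mul_nonneg hε.le (hs0' (k+1))
      show s k ^ 2 ≤ s (k+1) ^ 2
      linarith
    have hB : ∀ N, ∑ k ∈ Finset.range N,
        (s (k+1)^2 - s k ^2) * (f (y (k+1)) - f xs)
        ≤ ε^2/2 * ‖y 0 - xs‖^2 := by
      intro N
      have e1 : ∀ k ∈ Finset.range N, (s (k+1)^2 - s k ^2) * (f (y (k+1)) - f xs)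
          = ε^2/2 * (2 * (s (k+1) / ε) * (f (y (k+1)) - f xs)) := by
        intro k _
        have h1 := hsq k
        have h2 := hslam (k+1)
        linear_combination (f (y (k+1)) - f xs) * h1
          + ε * (f (y (k+1)) - f xs) * h2
      rw [Finset.sum_congr rfl e1, ← Finset.mul_sum]
      exact mul_le_mul_of_nonneg_left (hsum N) (by positivity)
    exact aux_tendsto_zero (fun k => s k ^ 2) (fun k => f (y k) - f xs)
      (ε^2/2 * ‖y 0 - xs‖^2) hwmono (fun k => sq_nonneg _) hδanti hδ0 hδt hB
  · -- weak convergence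
    set R := ‖y 0 - xs‖ + ‖xs‖ with hR
    have hyR : ∀ k, ‖y k‖ ≤ R := by
      intro k
      have h1 : ‖y k - xs‖^2 ≤ ‖y 0 - xs‖^2 := hranti xs hxs (Nat.zero_le k)
      have h2 : ‖y k - xs‖ ≤ ‖y 0 - xs‖ := by
        nlinarith [norm_nonneg (y k - xs), norm_nonneg (y 0 - xs)]
      calc ‖y k‖ = ‖(y k - xs) + xs‖ := by rw [sub_add_cancel]
        _ ≤ ‖y k - xs‖ + ‖xs‖ := norm_add_le _ _
        _ ≤ R := by rw [hR]; linarith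
    -- cluster point machinery
    have hcluster : ∀ L : Filter ℕ, L.NeBot → L ≤ atTop →
        ∃ q : H, (∀ v, f q ≤ f v) ∧
          ∀ u : H, ∀ ε' : ℝ, 0 < ε' → ∃ᶠ k in L, |⟪y k - q, u⟫| < ε' := by
      intro L hLne hLle
      haveI := hLne
      set D := InnerProductSpace.toDual ℝ H with hD
      set Φ : ℕ → WeakDual ℝ H :=
        fun k => StrongDual.toWeakDual (D (y k)) with hΦ
      set K : Set (WeakDual ℝ H) :=
        WeakDual.toStrongDual ⁻¹' Metric.closedBall (0 : StrongDual ℝ H) R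
        with hK
      have hmem : ∀ k, Φ k ∈ K := by
        intro k
        simp only [hK, Set.mem_preimage, Metric.mem_closedBall, dist_zero_right]
        show ‖D (y k)‖ ≤ R
        rw [D.norm_map]
        exact hyR k
      have hKc : IsCompact K := WeakDual.isCompact_closedBall (𝕜 := ℝ) (E := H) 0 R
      have hmap : Filter.map Φ L ≤ Filter.principal K := by
        rw [Filter.le_principal_iff, Filter.mem_map]
        exact Filter.univ_mem' hmem
      obtain ⟨ψ, hψK, hψcl⟩ := hKc.exists_mapClusterPt hmap
      set q := D.symm (WeakDual.toStrongDual ψ) with hq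
      have hqval : ∀ u : H, ⟪q, u⟫ = ψ u := by
        intro u
        have h1 : D q = WeakDual.toStrongDual ψ := D.apply_symm_apply _
        calc ⟪q, u⟫ = D q u := (InnerProductSpace.toDual_apply_apply).symm
          _ = ψ u := by rw [h1]; rfl
      have hΦval : ∀ k (u : H), Φ k u = ⟪y k, u⟫ := by
        intro k u
        show D (y k) u = _
        exact InnerProductSpace.toDual_apply_apply
      have hfreq : ∀ u : H, ∀ ε' : ℝ, 0 < ε' →
          ∃ᶠ k in L, |⟪y k - q, u⟫| < ε' := by
        intro u ε' hε'
        have hco : Continuous fun ψ' : WeakDual ℝ H => |ψ' u - ψ u| :=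
          ((WeakDual.eval_continuous u).sub continuous_const).abs
        have hUo : IsOpen {ψ' : WeakDual ℝ H | |ψ' u - ψ u| < ε'} :=
          isOpen_lt hco continuous_const
        have hU : {ψ' : WeakDual ℝ H | |ψ' u - ψ u| < ε'} ∈ nhds ψ :=
          hUo.mem_nhds (by simp [hε'])
        have hfr := (mapClusterPt_iff_frequently.1 hψcl) _ hU
        refine hfr.mono fun k hk => ?_
        have h2 : ⟪y k - q, u⟫ = Φ k u - ψ u := by
          rw [inner_sub_left, hΦval, hqval]
        rwa [h2]
      refine ⟨q, ?_, hfreq⟩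
      -- q is a minimizer
      by_contra hnq
      push_neg at hnq
      obtain ⟨v0, hv0⟩ := hnq
      have hlt : f xs < f q := lt_of_le_of_lt (hxs v0) hv0
      set c0 := (f xs + f q)/2 with hc0
      have hCconv : Convex ℝ {x : H | f x ≤ c0} := by
        have := hconv.convex_le c0
        simpa using this
      have hCcl : IsClosed {x : H | f x ≤ c0} := hlsc.isClosed_preimage c0
      have hqC : q ∉ {x : H | f x ≤ c0} := by
        simp only [Set.mem_setOf_eq, not_le, hc0]
        linarith
      obtain ⟨g, u0, hgC, hgq⟩ :=
        geometric_hahn_banach_closed_point hCconv hCcl hqC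
      set w := D.symm g with hw
      have hgw : ∀ z : H, g z = ⟪w, z⟫ := by
        intro z
        have h1 : D w = g := D.apply_symm_apply g
        rw [← h1, InnerProductSpace.toDual_apply_apply]
      have hev : ∀ᶠ k in L, f (y k) ≤ c0 := by
        apply hLle
        have h1 := (Metric.tendsto_nhds.1 hδt) ((f q - f xs)/2) (by linarith)
        refine h1.mono fun k hk => ?_
        rw [Real.dist_eq, sub_zero] at hk
        have := abs_lt.1 hk
        rw [hc0]
        linarith [this.1, this.2]
      have hfr := hfreq w (g q - u0) (by linarith)
      obtain ⟨k, hk1, hk2⟩ := (hfr.and_eventually hev).exists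
      have h3 : g (y k) < u0 := hgC _ hk2
      have h4 : ⟪y k - q, w⟫ = g (y k) - g q := by
        rw [real_inner_comm, ← hgw, map_sub]
      rw [h4] at hk1
      have := abs_lt.1 hk1
      linarith [this.1]
    obtain ⟨p, hpmin, hpfreq⟩ := hcluster atTop atTop_neBot le_rfl
    refine ⟨p, hpmin, ?_⟩
    -- convergence of mixed inner products
    have hinnerconv : ∀ p' q' : H, (∀ v', f p' ≤ f v') → (∀ v', f q' ≤ f v') →
        ∃ c, Tendsto (fun k => ⟪y k - p', p' - q'⟫) atTop (nhds c) := by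
      intro p' q' hp' hq'
      obtain ⟨Lp, hLp⟩ := hrconv p' hp'
      obtain ⟨Lq, hLq⟩ := hrconv q' hq'
      refine ⟨(Lq - Lp - ‖p' - q'‖^2)/2, ?_⟩
      have hid : (fun k => ⟪y k - p', p' - q'⟫)
          = fun k => (‖y k - q'‖^2 - ‖y k - p'‖^2 - ‖p' - q'‖^2)/2 := by
        funext k
        have h1 : y k - q' = (y k - p') + (p' - q') := by abel
        rw [h1, norm_add_sq_real]
        ring
      rw [hid]
      exact ((hLq.sub hLp).sub tendsto_const_nhds).div_const 2
    intro v
    by_contra hnot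
    rw [NormedAddCommGroup.tendsto_nhds_zero] at hnot
    push_neg at hnot
    obtain ⟨ε0, hε0, hfr⟩ := hnot
    have hfr' : ∃ᶠ k in atTop, k ∈ {k | ε0 ≤ |⟪y k - p, v⟫|} := by
      refine hfr.mono fun k hk => ?_
      simp only [Real.norm_eq_abs, not_lt] at hk
      exact hk
    have hLne : (atTop ⊓ Filter.principal {k | ε0 ≤ |⟪y k - p, v⟫|}).NeBot :=
      Filter.frequently_mem_iff_neBot.1 hfr'
    obtain ⟨q, hqmin, hqfreq⟩ := hcluster _ hLne inf_le_left
    -- uniqueness: p = q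
    have hpq : p = q := by
      obtain ⟨c, hc⟩ := hinnerconv p q hpmin hqmin
      obtain ⟨c', hc'⟩ := hinnerconv q p hqmin hpmin
      have hczero : ∀ (b : ℕ → ℝ) (cc : ℝ), Tendsto b atTop (nhds cc) →
          (∀ ε' : ℝ, 0 < ε' → ∃ᶠ k in atTop, |b k| < ε') → cc = 0 := by
        intro b cc hb hfb
        by_contra hcne
        have hpos : 0 < |cc| := abs_pos.2 hcne
        have h1 := hfb (|cc|/2) (by linarith)
        have h2 : ∀ᶠ k in atTop, |b k - cc| < |cc|/2 := by
          have := (Metric.tendsto_nhds.1 hb) (|cc|/2) (by linarith)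
          refine this.mono fun k hk => ?_
          rwa [Real.dist_eq] at hk
        obtain ⟨k, hk1, hk2⟩ := (h1.and_eventually h2).exists
        have ha := abs_lt.1 hk1
        have hb2 := abs_lt.1 hk2
        have : |cc| < |cc| := by
          rw [abs_lt]
          constructor <;> [linarith [ha.1, hb2.1]; linarith [ha.2, hb2.2]]
        exact absurd this (lt_irrefl _)
      have hc0 : c = 0 :=
        hczero _ _ hc (fun ε' hε' => hpfreq (p - q) ε' hε')
      have hc'0 : c' = 0 := by
        by_contra hcne
        have hpos : 0 < |c'| := abs_pos.2 hcne
        have h1 := hqfreq (q - p) (|c'|/2) (by linarith)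
        have h2 : ∀ᶠ k in (atTop ⊓ Filter.principal {k | ε0 ≤ |⟪y k - p, v⟫|}),
            |⟪y k - q, q - p⟫ - c'| < |c'|/2 := by
          apply Filter.Eventually.filter_mono inf_le_left
          have := (Metric.tendsto_nhds.1 hc') (|c'|/2) (by linarith)
          refine this.mono fun k hk => ?_
          rwa [Real.dist_eq] at hk
        obtain ⟨k, hk1, hk2⟩ := (h1.and_eventually h2).exists
        have ha := abs_lt.1 hk1
        have hb2 := abs_lt.1 hk2
        have : |c'| < |c'| := by
          rw [abs_lt]
          constructor <;> [linarith [ha.1, hb2.1]; linarith [ha.2, hb2.2]]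
        exact absurd this (lt_irrefl _)
      have hconst : ∀ k, ⟪y k - p, p - q⟫ + ⟪y k - q, q - p⟫ = -‖p - q‖^2 := by
        intro k
        have h1 : (⟪y k - p, p - q⟫ : ℝ) - ⟪y k - q, p - q⟫ = ⟪q - p, p - q⟫ := by
          rw [← inner_sub_left]
          congr 1
          abel
        have h2 : (⟪y k - q, q - p⟫ : ℝ) = - ⟪y k - q, p - q⟫ := by
          rw [← inner_neg_right]
          congr 1
          abel
        have h3 : (⟪q - p, p - q⟫ : ℝ) = -‖p - q‖^2 := by
          rw [show q - p = -(p - q) by abel, inner_neg_left,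
            real_inner_self_eq_norm_sq]
        linarith
      have hsum2 : Tendsto (fun k => ⟪y k - p, p - q⟫ + ⟪y k - q, q - p⟫)
          atTop (nhds (c + c')) := hc.add hc'
      have hsum3 : Tendsto (fun _ : ℕ => -‖p - q‖^2) atTop (nhds (c + c')) := by
        have : (fun k => ⟪y k - p, p - q⟫ + ⟪y k - q, q - p⟫)
            = fun _ : ℕ => -‖p - q‖^2 := funext hconst
        rwa [this] at hsum2
      have h4 : -‖p - q‖^2 = c + c' := tendsto_nhds_unique tendsto_const_nhds hsum3
      have h5 : ‖p - q‖^2 = 0 := by rw [hc0, hc'0] at h4; linarith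
      have h6 : ‖p - q‖ = 0 := by
        nlinarith [norm_nonneg (p - q)]
      have h7 : p - q = 0 := norm_eq_zero.1 h6
      exact sub_eq_zero.1 h7
    have hev : ∀ᶠ k in (atTop ⊓ Filter.principal {k | ε0 ≤ |⟪y k - p, v⟫|}),
        ε0 ≤ |⟪y k - p, v⟫| := by
      apply Filter.Eventually.filter_mono inf_le_right
      exact Filter.eventually_principal.2 fun k hk => hk
    obtain ⟨k, hk1, hk2⟩ := ((hqfreq v ε0 hε0).and_eventually hev).exists
    rw [← hpq] at hk1
    linarith
end

section
/- Let f : H → ℝ be convex and lower semicontinuous with argmin_H f nonempty, and let α > 1. Define the step sizes by s_0 = 0 and s_{k+1} = (α − 1 + √((α−1)² + 4s_k²))/2 for k ≥ 0. Let (y_k)_{k≥0}, (η_k)_{k≥1}, (x_k)_{k≥0} ⊆ H be sequences such that for every k ≥ 0, η_{k+1} is a subgradient of f at y_{k+1}, y_{k+1} = y_k − (s_{k+1}/(α−1))·η_{k+1}, and x_{k+1} = (1 − (α−1)/s_{k+1})·x_k + ((α−1)/s_{k+1})·y_{k+1}. Then there exists a constant C ≥ 0 such that f(x_k) − inf_H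 f ≤ C/s_k² ≤ 4C/((α−1)²(k+1)²) for all k ≥ 1, and (x_k) converges weakly as k → ∞ to some point of S = argmin_H f, i.e., there exists x* ∈ S such that ⟨x_k − x*, v⟩ → 0 as k → ∞ for every v ∈ H. -/
open MeasureTheory Filter Set
open scoped Topology RealInnerProductSpace

section ApaAux
set_option linter.unusedSectionVars false

variable {H : Type*} [NormedAddCommGroup H] [InnerProductSpace ℝ H] [CompleteSpace H]

lemma apa_exists_subseq_inner_conv (y : ℕ → H) (R : ℝ) (hR : ∀ k, ‖y k‖ ≤ R) :
    ∃ φ : ℕ → ℕ, StrictMono φ ∧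
      ∀ i, ∃ l : ℝ, Tendsto (fun k => ⟪y (φ k), y i⟫) atTop (𝓝 l) := by
  set g : ℕ → (ℕ → ℝ) := fun k i => ⟪y k, y i⟫ with hg
  have hmem : ∀ k, g k ∈ Set.pi univ (fun _ : ℕ => Icc (-(R*R)) (R*R)) := by
    intro k i _
    have h1 : |⟪y k, y i⟫| ≤ ‖y k‖ * ‖y i‖ := abs_real_inner_le_norm _ _
    have h2 : ‖y k‖ * ‖y i‖ ≤ R * R := by
      have := norm_nonneg (y k); have := norm_nonneg (y i)
      have := hR k; have := hR i
      nlinarith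
    have := abs_le.1 (h1.trans h2)
    exact ⟨this.1, this.2⟩
  have hcp : IsSeqCompact (Set.pi univ fun _ : ℕ => Icc (-(R*R)) (R*R)) :=
    (isCompact_univ_pi fun _ => isCompact_Icc).isSeqCompact
  obtain ⟨a, -, φ, hφ, hconv⟩ := hcp hmem
  refine ⟨φ, hφ, fun i => ⟨a i, ?_⟩⟩
  have := tendsto_pi_nhds.1 hconv i
  exact this

lemma apa_exists_weak_subseq (y : ℕ → H) (R : ℝ) (hR : ∀ k, ‖y k‖ ≤ R) :
    ∃ φ : ℕ → ℕ, StrictMono φ ∧ ∃ q : H,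
      ∀ v : H, Tendsto (fun k => ⟪y (φ k), v⟫) atTop (𝓝 ⟪q, v⟫) := by
  have hR0 : 0 ≤ R := (norm_nonneg (y 0)).trans (hR 0)
  obtain ⟨φ, hφ, hi⟩ := apa_exists_subseq_inner_conv y R hR
  set z : ℕ → H := fun k => y (φ k) with hz
  have hRz : ∀ k, ‖z k‖ ≤ R := fun k => hR _
  have hspan : ∀ u ∈ Submodule.span ℝ (Set.range y),
      ∃ l, Tendsto (fun k => ⟪z k, u⟫) atTop (𝓝 l) := by
    intro u hu
    induction hu using Submodule.span_induction with
    | mem w hw =>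
        obtain ⟨i, rfl⟩ := hw
        exact hi i
    | zero => exact ⟨0, by simpa using tendsto_const_nhds⟩
    | add u v _ _ ihu ihv =>
        obtain ⟨l1, h1⟩ := ihu; obtain ⟨l2, h2⟩ := ihv
        exact ⟨l1 + l2, by simpa [inner_add_right] using h1.add h2⟩
    | smul c u _ ihu =>
        obtain ⟨l, h⟩ := ihu
        exact ⟨c * l, by simpa [real_inner_smul_right] using h.const_mul c⟩
  have hclos : ∀ u ∈ closure ((Submodule.span ℝ (Set.range y) : Submodule ℝ H) : Set H),
      ∃ l, Tendsto (fun k => ⟪z k, u⟫) atTop (𝓝 l) := by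
    intro u hu
    have hc : CauchySeq (fun k => ⟪z k, u⟫) := by
      rw [Metric.cauchySeq_iff]
      intro ε hε
      have hδ : 0 < ε / (4 * (R + 1)) := by positivity
      obtain ⟨w, hwmem, hwd⟩ := Metric.mem_closure_iff.1 hu _ hδ
      obtain ⟨l, hl⟩ := hspan w hwmem
      obtain ⟨N, hN⟩ := Metric.cauchySeq_iff.1 hl.cauchySeq (ε/2) (by positivity)
      refine ⟨N, fun m hm n hn => ?_⟩
      have key : ∀ j, |⟪z j, u⟫ - ⟪z j, w⟫| ≤ ε / 4 := by
        intro j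
        have : ⟪z j, u⟫ - ⟪z j, w⟫ = ⟪z j, u - w⟫ := (inner_sub_right _ _ _).symm
        rw [this]
        have h1 : |⟪z j, u - w⟫| ≤ ‖z j‖ * ‖u - w‖ := abs_real_inner_le_norm _ _
        have h2 : ‖u - w‖ < ε / (4 * (R + 1)) := by
          rw [← dist_eq_norm]; exact hwd
        have h3 : ‖z j‖ * ‖u - w‖ ≤ R * ‖u - w‖ :=
          mul_le_mul_of_nonneg_right (hRz j) (norm_nonneg _)
        have h4 : R * ‖u - w‖ ≤ R * (ε / (4 * (R + 1))) :=
          mul_le_mul_of_nonneg_left h2.le hR0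
        have h5 : R * (ε / (4 * (R + 1))) ≤ ε / 4 := by
          rw [mul_div_assoc'] at *
          rw [div_le_div_iff₀ (by positivity) (by norm_num)]
          nlinarith
        linarith
      have hd := hN m hm n hn
      rw [Real.dist_eq] at hd ⊢
      have k1 := key m; have k2 := key n
      have : ⟪z m, u⟫ - ⟪z n, u⟫ =
          (⟪z m, u⟫ - ⟪z m, w⟫) + (⟪z m, w⟫ - ⟪z n, w⟫) + (⟪z n, w⟫ - ⟪z n, u⟫) := by ring
      rw [this]
      calc |(⟪z m, u⟫ - ⟪z m, w⟫) + (⟪z m, w⟫ - ⟪z n, w⟫) + (⟪z n, w⟫ - ⟪z n, u⟫)|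
          ≤ |⟪z m, u⟫ - ⟪z m, w⟫| + |⟪z m, w⟫ - ⟪z n, w⟫| + |⟪z n, w⟫ - ⟪z n, u⟫| := by
            exact (abs_add_le _ _).trans (by gcongr; exact abs_add_le _ _)
        _ < ε := by
            have := abs_sub_comm (⟪z n, w⟫) (⟪z n, u⟫)
            rw [abs_sub_comm] at k2
            linarith
    exact cauchySeq_tendsto_of_complete hc
  have hall : ∀ v : H, ∃ l, Tendsto (fun k => ⟪z k, v⟫) atTop (𝓝 l) := by
    intro v
    set K := (Submodule.span ℝ (Set.range y)).topologicalClosure with hK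
    haveI : CompleteSpace K :=
      (Submodule.isClosed_topologicalClosure _).completeSpace_coe
    set w : H := (Submodule.orthogonalProjection K v : H) with hw
    have hv : ∀ k, ⟪z k, v⟫ = ⟪z k, w⟫ := by
      intro k
      have hzk : z k ∈ K :=
        Submodule.le_topologicalClosure _ (Submodule.subset_span ⟨φ k, rfl⟩)
      have h0 : ⟪z k, v - w⟫ = 0 :=
        (Submodule.mem_orthogonal _ _).1 (K.sub_starProjection_mem_orthogonal v) _ hzk
      have := inner_sub_right (𝕜 := ℝ) (z k) v w
      rw [h0] at this
      linarith [this]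
    have hwmem : w ∈ closure ((Submodule.span ℝ (Set.range y) : Submodule ℝ H) : Set H) := by
      have : w ∈ K := SetLike.coe_mem _
      rw [← Submodule.topologicalClosure_coe]
      exact this
    obtain ⟨l, hl⟩ := hclos w hwmem
    exact ⟨l, by simpa [hv] using hl⟩
  choose L hL using hall
  have hadd : ∀ u v : H, L (u + v) = L u + L v := by
    intro u v
    refine tendsto_nhds_unique (hL (u + v)) ?_
    simpa [inner_add_right] using (hL u).add (hL v)
  have hsmul : ∀ (c : ℝ) (u : H), L (c • u) = c * L u := by
    intro c u
    refine tendsto_nhds_unique (hL (c • u)) ?_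
    simpa [real_inner_smul_right] using (hL u).const_mul c
  have hbound : ∀ v : H, |L v| ≤ R * ‖v‖ := by
    intro v
    have h1 : Tendsto (fun k => |⟪z k, v⟫|) atTop (𝓝 |L v|) := (hL v).abs
    refine le_of_tendsto h1 (Eventually.of_forall fun k => ?_)
    exact (abs_real_inner_le_norm _ _).trans
      (mul_le_mul_of_nonneg_right (hRz k) (norm_nonneg _))
  let Lmap : H →ₗ[ℝ] ℝ :=
    { toFun := L, map_add' := hadd, map_smul' := hsmul }
  let Lc : H →L[ℝ] ℝ := LinearMap.mkContinuous Lmap R (fun v => by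
    simpa [Real.norm_eq_abs, Lmap] using hbound v)
  refine ⟨φ, hφ, (InnerProductSpace.toDual ℝ H).symm Lc, fun v => ?_⟩
  have hq : ⟪(InnerProductSpace.toDual ℝ H).symm Lc, v⟫ = Lc v := by
    rw [← InnerProductSpace.toDual_apply_apply]
    simp
  rw [hq]
  exact hL v


variable {H : Type*} [NormedAddCommGroup H] [InnerProductSpace ℝ H] [CompleteSpace H]

lemma apa_weak_mem_closure (z : ℕ → H) (q : H)
    (hw : ∀ v : H, Tendsto (fun k => ⟪z k, v⟫) atTop (𝓝 ⟪q, v⟫)) (n : ℕ) :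
    q ∈ closure (convexHull ℝ (z '' Ici n)) := by
  set A := convexHull ℝ (z '' Ici n) with hA
  have hAconv : Convex ℝ (closure A) := (convex_convexHull ℝ _).closure
  have hne : (closure A).Nonempty :=
    ⟨z n, subset_closure (subset_convexHull ℝ _ ⟨n, le_refl n, rfl⟩)⟩
  have hcomp : IsComplete (closure A) := isClosed_closure.isComplete
  obtain ⟨p, hp, hnorm⟩ := exists_norm_eq_iInf_of_complete_convex hne hcomp hAconv q
  have hineq := (norm_eq_iInf_iff_real_inner_le_zero hAconv hp).1 hnorm
  have hev : ∀ᶠ j in atTop, ⟪q - p, z j - p⟫ ≤ 0 := by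
    filter_upwards [eventually_ge_atTop n] with j hj
    exact hineq _ (subset_closure (subset_convexHull ℝ _ ⟨j, hj, rfl⟩))
  have hlim : Tendsto (fun j => ⟪q - p, z j - p⟫) atTop (𝓝 ⟪q - p, q - p⟫) := by
    have h1 : Tendsto (fun j => ⟪z j, q - p⟫) atTop (𝓝 ⟪q, q - p⟫) := hw (q - p)
    have h2 : ∀ j, ⟪q - p, z j - p⟫ = ⟪z j, q - p⟫ - ⟪p, q - p⟫ := by
      intro j
      rw [real_inner_comm (z j - p) (q - p), inner_sub_left]
    have h3 : ⟪q - p, q - p⟫ = ⟪q, q - p⟫ - ⟪p, q - p⟫ := inner_sub_left _ _ _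
    rw [h3]
    simpa only [h2] using h1.sub_const ⟪p, q - p⟫
  have hle : ⟪q - p, q - p⟫ ≤ 0 := le_of_tendsto hlim hev
  have : q - p = 0 := by
    have := real_inner_self_nonneg (x := q - p)
    have h0 : ⟪q - p, q - p⟫ = 0 := le_antisymm hle this
    exact inner_self_eq_zero.1 h0
  have : q = p := by rwa [sub_eq_zero] at this
  rw [this]; exact hp

lemma apa_min_of_weak_limit (f : H → ℝ) (hconv : ConvexOn ℝ Set.univ f)
    (hlsc : LowerSemicontinuous f) (z : ℕ → H) (q : H) (m : ℝ)
    (hw : ∀ v : H, Tendsto (fun k => ⟪z k, v⟫) atTop (𝓝 ⟪q, v⟫))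
    (hfz : Tendsto (fun k => f (z k)) atTop (𝓝 m)) : f q ≤ m := by
  refine le_of_forall_pos_le_add fun ε hε => ?_
  have hev : ∀ᶠ k in atTop, f (z k) < m + ε :=
    hfz.eventually (gt_mem_nhds (lt_add_of_pos_right m hε))
  obtain ⟨n, hn⟩ := eventually_atTop.1 hev
  by_contra hcon
  push_neg at hcon
  have hU : ∀ᶠ w in 𝓝 q, m + ε < f w := hlsc q (m + ε) hcon
  have hq := apa_weak_mem_closure z q hw n
  obtain ⟨w, hw1, hw2⟩ := mem_closure_iff_nhds.1 hq _ hU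
  obtain ⟨p, hpmem, hple⟩ :=
    hconv.exists_ge_of_mem_convexHull (subset_univ _) hw2
  obtain ⟨j, hj, rfl⟩ := hpmem
  exact absurd (hple.trans (hn j hj).le) (not_le.2 hw1)

lemma apa_toeplitz (w c : ℕ → ℝ) (hw : ∀ j, 0 ≤ w j)
    (hWtop : Tendsto (fun k => ∑ j ∈ Finset.range k, w j) atTop atTop)
    (hc : Tendsto c atTop (𝓝 0)) :
    Tendsto (fun k => (∑ j ∈ Finset.range k, w j * c j) / ∑ j ∈ Finset.range k, w j)
      atTop (𝓝 0) := by
  rw [Metric.tendsto_atTop]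
  intro ε hε
  have hc' : ∀ᶠ j in atTop, |c j| ≤ ε / 2 := by
    have := hc.abs
    simp only [abs_zero] at this
    exact this.eventually (ge_mem_nhds (by positivity))
  obtain ⟨N₁, hN₁⟩ := eventually_atTop.1 hc'
  set A := ∑ j ∈ Finset.range N₁, w j * |c j| with hA
  have hA0 : 0 ≤ A := Finset.sum_nonneg fun j _ => mul_nonneg (hw j) (abs_nonneg _)
  obtain ⟨N₂, hN₂⟩ := eventually_atTop.1 (tendsto_atTop.1 hWtop ((A + 1) * (2 / ε)))
  refine ⟨max N₁ N₂, fun k hk => ?_⟩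
  have hkN₁ : N₁ ≤ k := le_trans (le_max_left _ _) hk
  have hkN₂ : N₂ ≤ k := le_trans (le_max_right _ _) hk
  set W := ∑ j ∈ Finset.range k, w j with hW
  have hWk : (A + 1) * (2 / ε) ≤ W := hN₂ k hkN₂
  have hWpos : 0 < W := lt_of_lt_of_le (by positivity) hWk
  have hS : |∑ j ∈ Finset.range k, w j * c j| ≤ A + ε / 2 * W := by
    calc |∑ j ∈ Finset.range k, w j * c j|
        ≤ ∑ j ∈ Finset.range k, |w j * c j| := Finset.abs_sum_le_sum_abs _ _
      _ = ∑ j ∈ Finset.range k, w j * |c j| := by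
          refine Finset.sum_congr rfl fun j _ => ?_
          rw [abs_mul, abs_of_nonneg (hw j)]
      _ = A + ∑ j ∈ Finset.Ico N₁ k, w j * |c j| :=
          (Finset.sum_range_add_sum_Ico _ hkN₁).symm
      _ ≤ A + ∑ j ∈ Finset.Ico N₁ k, w j * (ε / 2) := by
          gcongr with j hj
          · exact hw j
          · exact hN₁ j (Finset.mem_Ico.1 hj).1
      _ = A + (∑ j ∈ Finset.Ico N₁ k, w j) * (ε / 2) := by
          rw [Finset.sum_mul]
      _ ≤ A + W * (ε / 2) := by
          have hsub : ∑ j ∈ Finset.Ico N₁ k, w j ≤ W := by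
            refine Finset.sum_le_sum_of_subset_of_nonneg ?_ fun j _ _ => hw j
            intro j hj
            exact Finset.mem_range.2 (Finset.mem_Ico.1 hj).2
          nlinarith [half_pos hε]
      _ = A + ε / 2 * W := by ring
  have hAW : A / W < ε / 2 := by
    rw [div_lt_iff₀ hWpos]
    have h1 : ε * ((A + 1) * (2 / ε)) = 2 * (A + 1) := by field_simp
    have h2 := mul_le_mul_of_nonneg_left hWk (le_of_lt hε)
    nlinarith
  rw [Real.dist_eq, sub_zero, abs_div, abs_of_pos hWpos]
  have hfinal : |∑ j ∈ Finset.range k, w j * c j| / W ≤ A / W + ε / 2 := by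
    rw [div_add' _ _ _ (ne_of_gt hWpos)]
    gcongr
  calc |∑ j ∈ Finset.range k, w j * c j| / W ≤ A / W + ε / 2 := hfinal
    _ < ε := by linarith
end ApaAux

set_option maxHeartbeats 1000000 in
/-- Averaged proximal algorithm: O(1/k²) convergence of the values along the averaged
sequence `(x k)` and weak convergence towards a minimizer of `f`. -/
theorem averaged_proximal_algorithm_convergence
    {H : Type*} [NormedAddCommGroup H] [InnerProductSpace ℝ H] [CompleteSpace H]
    (f : H → ℝ)
    (hconv : ConvexOn ℝ Set.univ f)
    (hlsc : LowerSemicontinuous f)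
    (hmin : ∃ z, ∀ y, f z ≤ f y)
    (α : ℝ) (hα : 1 < α)
    (s : ℕ → ℝ) (hs0 : s 0 = 0)
    (hsrec : ∀ k, s (k + 1)
      = (α - 1 + Real.sqrt ((α - 1) ^ 2 + 4 * (s k) ^ 2)) / 2)
    (y η x : ℕ → H)
    (hsub : ∀ k, ∀ z : H, f (y (k + 1)) + ⟪η (k + 1), z - y (k + 1)⟫ ≤ f z)
    (hstep : ∀ k, y (k + 1) = y k - (s (k + 1) / (α - 1)) • η (k + 1))
    (hav : ∀ k, x (k + 1)
      = (1 - (α - 1) / s (k + 1)) • x k + ((α - 1) / s (k + 1)) • y (k + 1)) :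
    (∃ C : ℝ, 0 ≤ C ∧ ∀ k : ℕ, 1 ≤ k →
      f (x k) - (⨅ v, f v) ≤ C / (s k) ^ 2 ∧
      C / (s k) ^ 2 ≤ 4 * C / ((α - 1) ^ 2 * ((k : ℝ) + 1) ^ 2)) ∧
    ∃ xstar : H, (∀ v, f xstar ≤ f v) ∧
      ∀ v : H, Tendsto (fun k => ⟪x k - xstar, v⟫) atTop (nhds 0) := by
  obtain ⟨u₀, hu₀⟩ := hmin
  set β : ℝ := α - 1 with hβ
  clear_value β
  have hβpos : 0 < β := by simp only [hβ]; linarith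
  -- basic properties of s
  have hs_ge : ∀ k, β ≤ s (k + 1) := by
    intro k
    rw [hsrec k]
    have h1 : β ≤ Real.sqrt (β ^ 2 + 4 * (s k) ^ 2) := by
      have h2 : β ^ 2 ≤ β ^ 2 + 4 * (s k) ^ 2 := by nlinarith [sq_nonneg (s k)]
      calc β = Real.sqrt (β ^ 2) := by rw [Real.sqrt_sq hβpos.le]
        _ ≤ _ := Real.sqrt_le_sqrt h2
    linarith
  have hs_pos : ∀ k, 0 < s (k + 1) := fun k => lt_of_lt_of_le hβpos (hs_ge k)
  have hs_nonneg : ∀ k, 0 ≤ s k := by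
    intro k
    cases k with
    | zero => rw [hs0]
    | succ n => exact (hs_pos n).le
  have hs_sq : ∀ k, s (k + 1) ^ 2 = β * s (k + 1) + (s k) ^ 2 := by
    intro k
    have h1 : 2 * s (k + 1) - β = Real.sqrt (β ^ 2 + 4 * (s k) ^ 2) := by
      rw [hsrec k]; ring
    have h2 : (2 * s (k + 1) - β) ^ 2 = β ^ 2 + 4 * (s k) ^ 2 := by
      rw [h1, Real.sq_sqrt (by positivity)]
    nlinarith [h2]
  have hs_lb : ∀ k : ℕ, 1 ≤ k → β * ((k : ℝ) + 1) / 2 ≤ s k := by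
    intro k hk
    induction k with
    | zero => omega
    | succ n ih =>
      rcases Nat.eq_zero_or_pos n with hn | hn
      · subst hn
        have h1 : s 1 = β := by
          rw [hsrec 0, hs0]
          norm_num
          rw [Real.sqrt_sq hβpos.le]
          ring
        rw [h1]
        push_cast
        linarith
      · have ihn := ih hn
        have h1 : Real.sqrt (β ^ 2 + 4 * (s n) ^ 2) ≥ 2 * s n := by
          have : (2 * s n) ^ 2 ≤ β ^ 2 + 4 * (s n) ^ 2 := by nlinarith [sq_nonneg β]
          calc (2 : ℝ) * s n = Real.sqrt ((2 * s n) ^ 2) := by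
                rw [Real.sqrt_sq (by linarith [hs_nonneg n])]
            _ ≤ _ := Real.sqrt_le_sqrt this
        have h2 : s (n + 1) ≥ β / 2 + s n := by
          rw [hsrec n]; linarith
        push_cast
        push_cast at ihn
        linarith
  have hstend : Tendsto s atTop atTop := by
    apply tendsto_atTop_mono' _ (_ : ∀ᶠ k : ℕ in atTop, β * ((k : ℝ) + 1) / 2 ≤ s k)
    · apply Tendsto.atTop_div_const (by norm_num)
      apply Tendsto.const_mul_atTop hβpos
      exact (tendsto_natCast_atTop_atTop (R := ℝ)).atTop_add tendsto_const_nhds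
    · filter_upwards [eventually_ge_atTop 1] with k hk using hs_lb k hk
  -- infimum
  have hbdd : BddBelow (Set.range f) := ⟨f u₀, by rintro a ⟨v, rfl⟩; exact hu₀ v⟩
  have hinf : (⨅ v, f v) = f u₀ := le_antisymm (ciInf_le hbdd u₀) (le_ciInf hu₀)
  set fs := f u₀ with hfs
  clear_value fs
  -- eta formula
  have hη : ∀ k, η (k + 1) = (β / s (k + 1)) • (y k - y (k + 1)) := by
    intro k
    have h1 : y k - y (k + 1) = (s (k + 1) / β) • η (k + 1) := by
      rw [hstep k]; rw [hβ]; abel_nf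
    rw [h1, smul_smul]
    have : β / s (k + 1) * (s (k + 1) / β) = 1 := by
      field_simp
      exact div_self (ne_of_gt (hs_pos k))
    rw [this, one_smul]
  have hu₀' : ∀ w, f u₀ ≤ f w := fun w => (le_of_eq hfs.symm).trans (hu₀ w)
  -- Fejer
  have sq_le_helper : ∀ a b : ℝ, 0 ≤ a → 0 ≤ b → a ^ 2 ≤ b ^ 2 → a ≤ b := by
    intro a b ha hb h; nlinarith
  have hfej : ∀ (u : H), (∀ w, f u ≤ f w) → ∀ k,
      ‖y (k + 1) - u‖ ^ 2 + ‖y k - y (k + 1)‖ ^ 2 ≤ ‖y k - u‖ ^ 2 := by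
    intro u humin k
    have h1 : 0 ≤ ⟪y k - y (k + 1), y (k + 1) - u⟫ := by
      have h2 := hsub k u
      have h3 : f u ≤ f (y (k + 1)) := humin _
      have h4 : ⟪η (k + 1), u - y (k + 1)⟫ ≤ 0 := by linarith
      have h5 : 0 ≤ ⟪η (k + 1), y (k + 1) - u⟫ := by
        have he : ⟪η (k + 1), y (k + 1) - u⟫ = -⟪η (k + 1), u - y (k + 1)⟫ := by
          rw [← inner_neg_right]
          congr 1
          abel
        rw [he]; linarith
      have h6 : ⟪η (k + 1), y (k + 1) - u⟫
          = (β / s (k + 1)) * ⟪y k - y (k + 1), y (k + 1) - u⟫ := by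
        rw [hη k, real_inner_smul_left]
      rw [h6] at h5
      nlinarith [div_pos hβpos (hs_pos k)]
    have expand := norm_add_sq_real (y k - y (k + 1)) (y (k + 1) - u)
    have habel : y k - y (k + 1) + (y (k + 1) - u) = y k - u := by abel
    rw [habel] at expand
    nlinarith
  -- bounds on y
  set D : ℝ := ‖y 0 - u₀‖ with hD
  clear_value D
  have hD0 : 0 ≤ D := by rw [hD]; positivity
  have hyb : ∀ k, ‖y k - u₀‖ ≤ D := by
    intro k
    rw [hD]
    apply sq_le_helper _ _ (norm_nonneg _) (norm_nonneg _)
    induction k with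
    | zero => exact le_refl _
    | succ n ih =>
      have := hfej u₀ hu₀' n
      nlinarith [sq_nonneg ‖y n - y (n + 1)‖]
  set R : ℝ := D + ‖u₀‖ with hR
  clear_value R
  have hyR : ∀ k, ‖y k‖ ≤ R := by
    intro k
    calc ‖y k‖ = ‖(y k - u₀) + u₀‖ := by congr 1; abel
      _ ≤ ‖y k - u₀‖ + ‖u₀‖ := norm_add_le _ _
      _ ≤ R := by rw [hR]; linarith [hyb k]
  -- f (y k) tends to fs
  have hfy_lb : ∀ k, fs ≤ f (y k) := fun k => hu₀ _
  have hfy_ub : ∀ k, f (y (k + 1)) ≤ fs + β * (2 * D) * D / s (k + 1) := by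
    intro k
    have h2 := hsub k u₀
    have h3 : |⟪η (k + 1), u₀ - y (k + 1)⟫| ≤ β * (2 * D) * D / s (k + 1) := by
      have h4 : ‖η (k + 1)‖ ≤ (β / s (k + 1)) * (2 * D) := by
        rw [hη k, norm_smul, Real.norm_eq_abs,
          abs_of_pos (div_pos hβpos (hs_pos k))]
        have h5 : ‖y k - y (k + 1)‖ ≤ 2 * D := by
          calc ‖y k - y (k + 1)‖ = ‖(y k - u₀) - (y (k + 1) - u₀)‖ := by congr 1; abel
            _ ≤ ‖y k - u₀‖ + ‖y (k + 1) - u₀‖ := norm_sub_le _ _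
            _ ≤ 2 * D := by linarith [hyb k, hyb (k + 1)]
        exact mul_le_mul_of_nonneg_left h5 (div_pos hβpos (hs_pos k)).le
      have h6 : ‖u₀ - y (k + 1)‖ ≤ D := by
        rw [norm_sub_rev]; exact hyb (k + 1)
      calc |⟪η (k + 1), u₀ - y (k + 1)⟫| ≤ ‖η (k + 1)‖ * ‖u₀ - y (k + 1)‖ :=
            abs_real_inner_le_norm _ _
        _ ≤ (β / s (k + 1)) * (2 * D) * D := by
            apply mul_le_mul h4 h6 (norm_nonneg _)
            have := (div_pos hβpos (hs_pos k)).le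
            nlinarith
        _ = β * (2 * D) * D / s (k + 1) := by ring
    have := abs_le.1 h3
    linarith [this.1]
  have hfy_tend : Tendsto (fun k => f (y k)) atTop (𝓝 fs) := by
    have hub : Tendsto (fun k => fs + β * (2 * D) * D / s k) atTop (𝓝 fs) := by
      have : Tendsto (fun k => β * (2 * D) * D / s k) atTop (𝓝 0) :=
        Tendsto.div_atTop tendsto_const_nhds hstend
      simpa using tendsto_const_nhds.add this
    apply tendsto_of_tendsto_of_tendsto_of_le_of_le'
      (tendsto_const_nhds : Tendsto (fun _ : ℕ => fs) atTop (𝓝 fs)) hub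
    · exact Eventually.of_forall hfy_lb
    · filter_upwards [eventually_ge_atTop 1] with k hk
      obtain ⟨m, rfl⟩ := Nat.exists_eq_add_of_le' hk
      simpa using hfy_ub m
  -- energy decrease
  have hE : ∀ k, s (k + 1) ^ 2 * (f (x (k + 1)) - fs) + β ^ 2 / 2 * ‖y (k + 1) - u₀‖ ^ 2 ≤
      s k ^ 2 * (f (x k) - fs) + β ^ 2 / 2 * ‖y k - u₀‖ ^ 2 := by
    intro k
    have hsk : 0 < s (k + 1) := hs_pos k
    set τ : ℝ := β / s (k + 1) with hτ
    have hτ0 : 0 ≤ τ := by positivity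
    have hτ1 : τ ≤ 1 := (div_le_one hsk).2 (hs_ge k)
    have hcx : f (x (k + 1)) ≤ (1 - τ) * f (x k) + τ * f (y (k + 1)) := by
      have h := hconv.2 (Set.mem_univ (x k)) (Set.mem_univ (y (k + 1)))
        (by linarith : (0:ℝ) ≤ 1 - τ) hτ0 (by ring)
      rw [hav k, hτ]
      rw [hτ] at h
      simpa [smul_eq_mul] using h
    clear_value τ
    have hcx' : f (x (k + 1)) - fs ≤ (1 - τ) * (f (x k) - fs) + τ * (f (y (k + 1)) - fs) := by
      have hr : (1 - τ) * (f (x k) - fs) + τ * (f (y (k + 1)) - fs)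
          = (1 - τ) * f (x k) + τ * f (y (k + 1)) - fs := by ring
      linarith
    have e1 : s (k + 1) ^ 2 * (1 - τ) = s k ^ 2 := by
      have : s (k + 1) ^ 2 * (1 - τ) = s (k + 1) ^ 2 - β * s (k + 1) := by
        rw [hτ]; field_simp
      rw [this]; linarith [hs_sq k]
    have e2 : s (k + 1) ^ 2 * τ = β * s (k + 1) := by
      rw [hτ]; field_simp
    have hmul := mul_le_mul_of_nonneg_left hcx' (sq_nonneg (s (k + 1)))
    have hdist : s (k + 1) ^ 2 * ((1 - τ) * (f (x k) - fs) + τ * (f (y (k + 1)) - fs))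
        = (s (k + 1) ^ 2 * (1 - τ)) * (f (x k) - fs)
          + (s (k + 1) ^ 2 * τ) * (f (y (k + 1)) - fs) := by ring
    rw [hdist, e1, e2] at hmul
    -- subgradient bound
    have hsg := hsub k u₀
    have h1 : f (y (k + 1)) - fs ≤ ⟪η (k + 1), y (k + 1) - u₀⟫ := by
      have he : ⟪η (k + 1), u₀ - y (k + 1)⟫ = -⟪η (k + 1), y (k + 1) - u₀⟫ := by
        rw [← inner_neg_right]; congr 1; abel
      rw [he] at hsg
      linarith
    have h2 : ⟪η (k + 1), y (k + 1) - u₀⟫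
        = τ * ⟪y k - y (k + 1), y (k + 1) - u₀⟫ := by
      rw [hη k, real_inner_smul_left, hτ]
    have h4 : β * s (k + 1) * ⟪η (k + 1), y (k + 1) - u₀⟫
        = β ^ 2 * ⟪y k - y (k + 1), y (k + 1) - u₀⟫ := by
      rw [h2, hτ]; field_simp
    have h3 : 2 * ⟪y k - y (k + 1), y (k + 1) - u₀⟫
        ≤ ‖y k - u₀‖ ^ 2 - ‖y (k + 1) - u₀‖ ^ 2 := by
      have expand := norm_add_sq_real (y k - y (k + 1)) (y (k + 1) - u₀)
      have habel : y k - y (k + 1) + (y (k + 1) - u₀) = y k - u₀ := by abel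
      rw [habel] at expand
      nlinarith [sq_nonneg ‖y k - y (k + 1)‖]
    have m1 := mul_le_mul_of_nonneg_left h1 (mul_nonneg hβpos.le hsk.le)
    have m2 := mul_le_mul_of_nonneg_left h3 (by positivity : (0:ℝ) ≤ β ^ 2 / 2)
    linarith only [m1, m2, h4, hmul]
  set C : ℝ := β ^ 2 / 2 * D ^ 2 with hC
  clear_value C
  have hC0 : 0 ≤ C := by rw [hC]; positivity
  have hEk : ∀ k, s k ^ 2 * (f (x k) - fs) + β ^ 2 / 2 * ‖y k - u₀‖ ^ 2 ≤ C := by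
    intro k
    induction k with
    | zero => rw [hs0]; simp [hC, hD]
    | succ n ih => linarith [hE n]
  constructor
  · -- rate part
    refine ⟨C, hC0, fun k hk => ?_⟩
    have hskpos : 0 < s k := by
      have := hs_lb k hk
      have hkpos : (0:ℝ) < β * ((k : ℝ) + 1) / 2 := by positivity
      linarith
    constructor
    · rw [hinf]
      rw [le_div_iff₀ (by positivity)]
      have := hEk k
      nlinarith [sq_nonneg ‖y k - u₀‖, mul_nonneg (by positivity : (0:ℝ) ≤ β ^ 2 / 2) (sq_nonneg ‖y k - u₀‖)]
    · have hlb := hs_lb k hk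
      have hsq : (β * ((k : ℝ) + 1) / 2) ^ 2 ≤ s k ^ 2 := by
        apply pow_le_pow_left₀ (by positivity) hlb
      rw [div_le_div_iff₀ (by positivity) (by positivity)]
      have hx1 : (β * ((k : ℝ) + 1) / 2) ^ 2 = β ^ 2 * ((k : ℝ) + 1) ^ 2 / 4 := by ring
      nlinarith [mul_le_mul_of_nonneg_left hsq hC0]
  · -- weak convergence part
    obtain ⟨φ, hφ, q, hq⟩ := apa_exists_weak_subseq y R hyR
    have hfyq : Tendsto (fun k => f (y (φ k))) atTop (𝓝 fs) :=
      hfy_tend.comp hφ.tendsto_atTop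
    have hqmin : ∀ w, f q ≤ f w := by
      intro w
      have := apa_min_of_weak_limit f hconv hlsc (fun k => y (φ k)) q fs hq hfyq
      exact this.trans (hu₀ w)
    -- limit of norms for minimizers
    have hlimnorm : ∀ (u : H), (∀ w, f u ≤ f w) →
        ∃ L, Tendsto (fun k => ‖y k - u‖ ^ 2) atTop (𝓝 L) := by
      intro u humin
      have hanti : Antitone fun k => ‖y k - u‖ ^ 2 := by
        apply antitone_nat_of_succ_le
        intro k
        have := hfej u humin k
        nlinarith [sq_nonneg ‖y k - y (k + 1)‖]
      refine ⟨_, tendsto_atTop_ciInf hanti ⟨0, ?_⟩⟩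
      rintro r ⟨k, rfl⟩
      positivity
    have hyweak : ∀ v : H, Tendsto (fun k => ⟪y k - q, v⟫) atTop (𝓝 0) := by
      intro v
      apply tendsto_of_subseq_tendsto
      intro ns hns
      obtain ⟨ψ, hψ, q', hq'⟩ := apa_exists_weak_subseq (fun k => y (ns k)) R (fun k => hyR _)
      have hcomp : Tendsto (fun k => ns (ψ k)) atTop atTop := hns.comp hψ.tendsto_atTop
      have hfyq' : Tendsto (fun k => f (y (ns (ψ k)))) atTop (𝓝 fs) := hfy_tend.comp hcomp
      have hq'min : ∀ w, f q' ≤ f w := by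
        intro w
        have := apa_min_of_weak_limit f hconv hlsc (fun k => y (ns (ψ k))) q' fs hq' hfyq'
        exact this.trans (hu₀ w)
      obtain ⟨Lq, hLq⟩ := hlimnorm q hqmin
      obtain ⟨Lq', hLq'⟩ := hlimnorm q' hq'min
      set c0 : ℝ := (Lq' - Lq + (‖q‖ ^ 2 - ‖q'‖ ^ 2)) / 2 with hc0
      clear_value c0
      have ht : Tendsto (fun k => ⟪y k, q - q'⟫) atTop (𝓝 c0) := by
        have h0 : Tendsto (fun k => (‖y k - q'‖ ^ 2 - ‖y k - q‖ ^ 2 + (‖q‖ ^ 2 - ‖q'‖ ^ 2)) / 2)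
            atTop (𝓝 c0) := by
          rw [hc0]
          exact (((hLq'.sub hLq).add_const (‖q‖ ^ 2 - ‖q'‖ ^ 2)).div_const 2)
        apply h0.congr
        intro k
        have e1 := norm_sub_sq_real (y k) q
        have e2 := norm_sub_sq_real (y k) q'
        have e3 : ⟪y k, q - q'⟫ = ⟪y k, q⟫ - ⟪y k, q'⟫ := inner_sub_right _ _ _
        linarith
      have eqq : ⟪q, q - q'⟫ = c0 :=
        tendsto_nhds_unique (hq (q - q')) (ht.comp hφ.tendsto_atTop)
      have eqq' : ⟪q', q - q'⟫ = c0 :=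
        tendsto_nhds_unique (hq' (q - q')) (ht.comp hcomp)
      have hqq' : q = q' := by
        have h5 : ⟪q - q', q - q'⟫ = 0 := by
          rw [inner_sub_left, eqq, eqq']; ring
        have := inner_self_eq_zero.1 h5
        rwa [sub_eq_zero] at this
      refine ⟨ψ, ?_⟩
      have h6 : Tendsto (fun n => ⟪y (ns (ψ n)), v⟫ - ⟪q, v⟫) atTop (𝓝 0) := by
        have h7 := (hq' v).sub_const ⟪q, v⟫
        rw [← hqq'] at h7
        simpa using h7
      apply h6.congr
      intro n
      rw [inner_sub_left]
    -- Toeplitz transfer to x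
    have hsum : ∀ k, (s k ^ 2) • x k = ∑ j ∈ Finset.range k, (β * s (j + 1)) • y (j + 1) := by
      intro k
      induction k with
      | zero => simp [hs0]
      | succ n ih =>
        have hne : s (n + 1) ≠ 0 := (hs_pos n).ne'
        rw [Finset.sum_range_succ, ← ih, hav n, smul_add, smul_smul, smul_smul]
        congr 2
        · have h7 : s (n + 1) ^ 2 * (1 - β / s (n + 1)) = s (n + 1) ^ 2 - β * s (n + 1) := by
            field_simp
          rw [h7]
          linarith [hs_sq n]
        · have h8 : s (n + 1) ^ 2 * (β / s (n + 1)) = β * s (n + 1) := by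
            field_simp
          rw [h8]
    have hWsum : ∀ k, ∑ j ∈ Finset.range k, β * s (j + 1) = s k ^ 2 := by
      intro k
      induction k with
      | zero => simp [hs0]
      | succ n ih =>
        rw [Finset.sum_range_succ, ih]
        linarith [hs_sq n]
    refine ⟨q, hqmin, fun v => ?_⟩
    set w : ℕ → ℝ := fun j => β * s (j + 1) with hwdef
    set c : ℕ → ℝ := fun j => ⟪y (j + 1) - q, v⟫ with hcdef
    have hw0 : ∀ j, 0 ≤ w j := fun j => mul_nonneg hβpos.le (hs_pos j).le
    have hWtop : Tendsto (fun k => ∑ j ∈ Finset.range k, w j) atTop atTop := by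
      have h8 : Tendsto (fun k => s k ^ 2) atTop atTop := by
        have := hstend.atTop_mul_atTop₀ hstend
        simpa [sq] using this
      exact h8.congr fun k => (hWsum k).symm
    have hc : Tendsto c atTop (𝓝 0) := by
      have := (hyweak v).comp (tendsto_add_atTop_nat 1)
      exact this
    have htp := apa_toeplitz w c hw0 hWtop hc
    have hsum_inner : ∀ k, ∑ j ∈ Finset.range k, w j * c j = s k ^ 2 * ⟪x k - q, v⟫ := by
      intro k
      have h9 : ⟪(s k ^ 2) • x k, v⟫ = ∑ j ∈ Finset.range k, β * s (j + 1) * ⟪y (j + 1), v⟫ := by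
        rw [hsum k, sum_inner]
        simp [real_inner_smul_left]
      calc ∑ j ∈ Finset.range k, w j * c j
          = ∑ j ∈ Finset.range k, (β * s (j + 1) * ⟪y (j + 1), v⟫
              - β * s (j + 1) * ⟪q, v⟫) := by
            refine Finset.sum_congr rfl fun j _ => ?_
            rw [hwdef, hcdef]
            simp only [inner_sub_left]
            ring
        _ = (∑ j ∈ Finset.range k, β * s (j + 1) * ⟪y (j + 1), v⟫)
              - (∑ j ∈ Finset.range k, β * s (j + 1)) * ⟪q, v⟫ := by
            rw [Finset.sum_sub_distrib, Finset.sum_mul]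
        _ = s k ^ 2 * ⟪x k, v⟫ - s k ^ 2 * ⟪q, v⟫ := by
            rw [← h9, hWsum k, real_inner_smul_left]
        _ = s k ^ 2 * ⟪x k - q, v⟫ := by
            rw [inner_sub_left]; ring
    have hev : (fun k => (∑ j ∈ Finset.range k, w j * c j) / ∑ j ∈ Finset.range k, w j)
        =ᶠ[atTop] fun k => ⟪x k - q, v⟫ := by
      filter_upwards [eventually_ge_atTop 1] with k hk
      have hskpos : 0 < s k := by
        have := hs_lb k hk
        have hkpos : (0:ℝ) < β * ((k : ℝ) + 1) / 2 := by positivity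
        linarith
      have hne : (s k) ^ 2 ≠ 0 := pow_ne_zero 2 hskpos.ne'
      rw [hsum_inner k, hWsum k, mul_comm (s k ^ 2) _, mul_div_assoc, div_self hne, mul_one]
    exact htp.congr' hev
end

section
/- Let M : H → H be a ρ-cocoercive operator (ρ > 0) whose zero set S = {x ∈ H : M(x) = 0} is nonempty. Let t0 > 0 and let z : [t0, ∞) → H be a continuously differentiable solution of ż(t) + M(z(t)) = g(t) for all t ≥ t0, where g : [t0, ∞) → H satisfies ∫_{t0}^∞ ‖g(t)‖ dt < ∞ and ∫_{t0}^∞ t‖g(t)‖² dt < ∞. Then: (i) ‖M(z(t))‖ = o(1/√t) as t → ∞ (i.e., √t·‖M(z(t))‖ → 0); (ii) ∫_{t0}^∞ ‖M(z(t))‖² dt < ∞; (iii) z(t) converges weakly as t → ∞ to some point of S, i.e., there exists x* with M(x*) = 0 such that ⟨z(t) − x*, v⟩ → 0 as t → ∞ for every v ∈ H. -/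
open MeasureTheory Filter Set
open scoped Topology RealInnerProductSpace

set_option maxHeartbeats 1000000


lemma aux_lip {H : Type*} [NormedAddCommGroup H] [InnerProductSpace ℝ H]
    (M : H → H) (ρ : ℝ) (hρ : 0 < ρ)
    (hco : ∀ x y : H, ρ * ‖M x - M y‖ ^ 2 ≤ ⟪M x - M y, x - y⟫) (x y : H) :
    ρ * ‖M x - M y‖ ≤ ‖x - y‖ := by
  rcases eq_or_ne (M x) (M y) with h | h
  · simp [h, norm_nonneg]
  · have h0 : 0 < ‖M x - M y‖ := by
      rw [norm_pos_iff, sub_ne_zero]; exact h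
    have := (hco x y).trans (real_inner_le_norm _ _)
    rw [pow_two] at this
    nlinarith [this, h0]

lemma aux_decrease {H : Type*} [NormedAddCommGroup H] [InnerProductSpace ℝ H] [CompleteSpace H]
    (M : H → H) (ρ : ℝ) (hρ : 0 < ρ)
    (hco : ∀ x y : H, ρ * ‖M x - M y‖ ^ 2 ≤ ⟪M x - M y, x - y⟫)
    (t0 : ℝ) (z z' g : ℝ → H)
    (hz : ∀ t ∈ Ici t0, HasDerivAt z (z' t) t)
    (hz'cont : ContinuousOn z' (Ici t0))
    (heq : ∀ t ∈ Ici t0, z' t + M (z t) = g t)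
    (hgc : ContinuousOn g (Ici t0))
    (hwc : ContinuousOn (fun u => M (z u)) (Ici t0))
    {s t : ℝ} (hs : t0 ≤ s) (hst : s ≤ t) :
    ‖M (z t)‖ ^ 2 ≤ ‖M (z s)‖ ^ 2 + (1 / (2 * ρ)) * ∫ u in s..t, ‖g u‖ ^ 2 := by
  rcases eq_or_lt_of_le hst with rfl | hlt
  · simp
  have hsub : Icc s t ⊆ Ici t0 := fun u hu => le_trans hs hu.1
  obtain ⟨B, hB⟩ := isCompact_Icc.exists_bound_of_continuousOn (hz'cont.mono hsub)
  have hB0 : 0 ≤ B := le_trans (norm_nonneg _) (hB s ⟨le_rfl, hst⟩)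
  obtain ⟨K, hKdef⟩ : ∃ K : ℝ, K = B / ρ := ⟨_, rfl⟩
  have hK0 : 0 ≤ K := hKdef ▸ div_nonneg hB0 hρ.le
  have hftc : ∀ a b, s ≤ a → a ≤ b → b ≤ t → z b - z a = ∫ u in a..b, z' u := by
    intro a b ha hab hb
    have hIcc : uIcc a b ⊆ Icc s t := by
      rw [uIcc_of_le hab]; exact Icc_subset_Icc ha hb
    exact (intervalIntegral.integral_eq_sub_of_hasDerivAt
      (fun u hu => hz u (hsub (hIcc hu)))
      ((hz'cont.mono (fun u hu => hsub (hIcc hu))).intervalIntegrable)).symm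
  have hzdiff : ∀ a b, s ≤ a → a ≤ b → b ≤ t → ‖z b - z a‖ ≤ B * (b - a) := by
    intro a b ha hab hb
    rw [hftc a b ha hab hb]
    have hsub2 : Set.uIoc a b ⊆ Icc s t := by
      rw [uIoc_of_le hab]
      exact fun v hv => ⟨le_trans ha (le_of_lt hv.1), le_trans hv.2 hb⟩
    have := intervalIntegral.norm_integral_le_of_norm_le_const (a := a) (b := b) (C := B)
      (f := z') (fun u hu => hB u (hsub2 hu))
    rwa [abs_of_nonneg (by linarith)] at this
  have hwLip : ∀ a b, s ≤ a → a ≤ b → b ≤ t → ‖M (z b) - M (z a)‖ ≤ K * (b - a) := by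
    intro a b ha hab hb
    have h1 := aux_lip M ρ hρ hco (z b) (z a)
    have h2 := hzdiff a b ha hab hb
    rw [hKdef, div_mul_eq_mul_div, le_div_iff₀ hρ]
    nlinarith [h1, h2]
  have hgint : ∀ a b, s ≤ a → a ≤ b → b ≤ t → IntervalIntegrable (fun u => ‖g u‖^2) volume a b := by
    intro a b ha hab hb
    have hIab : Icc a b ⊆ Ici t0 := fun u hu => hsub ⟨le_trans ha hu.1, le_trans hu.2 hb⟩
    apply ContinuousOn.intervalIntegrable
    rw [uIcc_of_le hab]
    exact (hgc.mono hIab).norm.pow 2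
  -- one-step inequality
  have step : ∀ a b, s ≤ a → a < b → b ≤ t →
      ‖M (z b)‖^2 ≤ ‖M (z a)‖^2 + (1/(2*ρ)) * (∫ u in a..b, ‖g u‖^2) + 3*K^2*(b-a)^2 := by
    intro a b ha hab hb
    obtain ⟨δ, hδdef⟩ : ∃ δ : ℝ, δ = b - a := ⟨_, rfl⟩
    have hδ : 0 < δ := by rw [hδdef]; linarith
    obtain ⟨Δ, hΔdef⟩ : ∃ Δ : H, Δ = M (z b) - M (z a) := ⟨_, rfl⟩
    have hIccab : Icc a b ⊆ Icc s t := Icc_subset_Icc ha hb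
    have h1 : ρ * ‖Δ‖^2 ≤ ⟪Δ, z b - z a⟫ := hΔdef ▸ hco (z b) (z a)
    have hgwint : IntervalIntegrable (fun u => g u - M (z u)) volume a b := by
      apply ContinuousOn.intervalIntegrable
      refine ((hgc.sub hwc).mono (fun u hu => hsub (hIccab ?_)))
      rwa [uIcc_of_le hab.le] at hu
    have h2 : z b - z a = ∫ u in a..b, (g u - M (z u)) := by
      rw [hftc a b ha hab.le hb]
      apply intervalIntegral.integral_congr
      intro u hu
      rw [uIcc_of_le hab.le] at hu
      exact eq_sub_of_add_eq (heq u (hsub (hIccab hu)))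
    have h3 : ⟪Δ, z b - z a⟫ = ∫ u in a..b, ⟪Δ, g u - M (z u)⟫ := by
      rw [h2]
      have := (innerSL ℝ Δ).intervalIntegral_comp_comm hgwint
      simpa using this.symm
    have hpt : ∀ u ∈ Icc a b, ⟪Δ, g u - M (z u)⟫ ≤
        (ρ/δ * ‖Δ‖^2 + (-⟪Δ, M (z a)⟫ + ‖Δ‖ * (K * δ))) + (δ/(4*ρ)) * ‖g u‖^2 := by
      intro u hu
      have hrw : g u - M (z u) = g u - M (z a) - (M (z u) - M (z a)) := by abel
      have e : ⟪Δ, g u - M (z u)⟫ = ⟪Δ, g u⟫ - ⟪Δ, M (z a)⟫ - ⟪Δ, M (z u) - M (z a)⟫ := by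
        rw [hrw, inner_sub_right, inner_sub_right]
      rw [e]
      have b1 : ⟪Δ, g u⟫ ≤ ρ/δ * ‖Δ‖^2 + (δ/(4*ρ)) * ‖g u‖^2 := by
        have hcs : ⟪Δ, g u⟫ ≤ ‖Δ‖ * ‖g u‖ := real_inner_le_norm _ _
        have key : ‖Δ‖ * ‖g u‖ ≤ ρ/δ * ‖Δ‖^2 + (δ/(4*ρ)) * ‖g u‖^2 := by
          rw [div_mul_eq_mul_div, div_mul_eq_mul_div, div_add_div _ _ (ne_of_gt hδ)
            (by positivity), le_div_iff₀ (by positivity)]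
          nlinarith [sq_nonneg (2*ρ*‖Δ‖ - δ*‖g u‖)]
        linarith
      have b2 : -⟪Δ, M (z u) - M (z a)⟫ ≤ ‖Δ‖ * (K * δ) := by
        have habs : |⟪Δ, M (z u) - M (z a)⟫| ≤ ‖Δ‖ * ‖M (z u) - M (z a)‖ :=
          abs_real_inner_le_norm _ _
        have hwu : ‖M (z u) - M (z a)‖ ≤ K * (u - a) := hwLip a u ha hu.1 (le_trans hu.2 hb)
        have hua : u - a ≤ δ := by rw [hδdef]; linarith [hu.2]
        nlinarith [neg_abs_le ⟪Δ, M (z u) - M (z a)⟫, norm_nonneg Δ,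
          mul_le_mul_of_nonneg_left hwu (norm_nonneg Δ),
          mul_le_mul_of_nonneg_left (mul_le_mul_of_nonneg_left hua hK0) (norm_nonneg Δ)]
      linarith [b1, b2]
    have hlhsint : IntervalIntegrable (fun u => ⟪Δ, g u - M (z u)⟫) volume a b := by
      apply ContinuousOn.intervalIntegrable
      apply ContinuousOn.inner continuousOn_const
      refine ((hgc.sub hwc).mono (fun u hu => hsub (hIccab ?_)))
      rwa [uIcc_of_le hab.le] at hu
    have hrhsint : IntervalIntegrable
        (fun u => (ρ/δ * ‖Δ‖^2 + (-⟪Δ, M (z a)⟫ + ‖Δ‖ * (K * δ))) + (δ/(4*ρ)) * ‖g u‖^2)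
        volume a b :=
      (intervalIntegrable_const).add ((hgint a b ha hab.le hb).const_mul _)
    have h4 : (∫ u in a..b, ⟪Δ, g u - M (z u)⟫) ≤
        δ * (ρ/δ * ‖Δ‖^2 + (-⟪Δ, M (z a)⟫ + ‖Δ‖ * (K * δ)))
          + (δ/(4*ρ)) * ∫ u in a..b, ‖g u‖^2 := by
      have := intervalIntegral.integral_mono_on hab.le hlhsint hrhsint hpt
      rwa [intervalIntegral.integral_add intervalIntegrable_const
        ((hgint a b ha hab.le hb).const_mul _), intervalIntegral.integral_const,
        intervalIntegral.integral_const_mul, smul_eq_mul, ← hδdef] at this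
    obtain ⟨I, hIdef⟩ : ∃ I : ℝ, I = ∫ u in a..b, ‖g u‖^2 := ⟨_, rfl⟩
    rw [← hIdef] at h4
    have h6 : ⟪Δ, M (z a)⟫ ≤ ‖Δ‖ * (K * δ) + (1/(4*ρ)) * I := by
      have e : δ * (ρ/δ * ‖Δ‖^2 + (-⟪Δ, M (z a)⟫ + ‖Δ‖ * (K * δ))) + (δ/(4*ρ)) * I
          = ρ*‖Δ‖^2 + δ*(-⟪Δ, M (z a)⟫) + δ*(‖Δ‖*(K*δ)) + δ*((1/(4*ρ))*I) := by
        field_simp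
        ring
      have hchain : ρ * ‖Δ‖^2 ≤ ρ*‖Δ‖^2 + δ*(-⟪Δ, M (z a)⟫) + δ*(‖Δ‖*(K*δ))
          + δ*((1/(4*ρ))*I) := by
        rw [← e]
        calc ρ * ‖Δ‖^2 ≤ ⟪Δ, z b - z a⟫ := h1
          _ = ∫ u in a..b, ⟪Δ, g u - M (z u)⟫ := h3
          _ ≤ _ := h4
      have h6' : δ * ⟪Δ, M (z a)⟫ ≤ δ * (‖Δ‖ * (K * δ) + (1/(4*ρ)) * I) := by
        rw [mul_add]; linarith [hchain]
      exact le_of_mul_le_mul_left h6' hδ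
    have hΔle : ‖Δ‖ ≤ K * δ := by
      rw [hΔdef, hδdef]; exact hwLip a b ha hab.le hb
    have h7 : ‖M (z b)‖^2 = ‖M (z a)‖^2 + 2*⟪Δ, M (z a)⟫ + ‖Δ‖^2 := by
      have hwb : M (z b) = M (z a) + Δ := by rw [hΔdef]; abel
      rw [hwb, norm_add_sq_real, real_inner_comm]
    have hKδ : ‖Δ‖ * (K * δ) ≤ K^2 * δ^2 := by nlinarith [norm_nonneg Δ, hK0, hδ.le]
    have hΔsq : ‖Δ‖^2 ≤ K^2 * δ^2 := by nlinarith [norm_nonneg Δ, hK0, hδ.le]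
    have hhalf : (1/(2*ρ)) * I = 2 * ((1/(4*ρ)) * I) := by field_simp; ring
    rw [h7, ← hIdef, ← hδdef]
    linarith [h6, hKδ, hΔsq]
  -- telescoping over a uniform partition, then n → ∞
  have main : ∀ n : ℕ, 0 < n →
      ‖M (z t)‖^2 ≤ ‖M (z s)‖^2 + (1/(2*ρ)) * (∫ u in s..t, ‖g u‖^2)
        + 3*K^2*(t-s)^2 / n := by
    intro n hn
    obtain ⟨δ, hδdef⟩ : ∃ δ : ℝ, δ = (t - s)/n := ⟨_, rfl⟩
    have hnR : (0:ℝ) < n := by exact_mod_cast hn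
    have hts : (0:ℝ) < t - s := by linarith
    have hδ : 0 < δ := by rw [hδdef]; positivity
    have hu_mem : ∀ i : ℕ, i ≤ n → s + i*δ ≤ t := by
      intro i hi
      have : (i:ℝ) ≤ n := by exact_mod_cast hi
      have hnd : s + n*δ = t := by rw [hδdef]; field_simp; ring
      nlinarith [this, hδ]
    have claim : ∀ i : ℕ, i ≤ n → ‖M (z (s + i*δ))‖^2 ≤ ‖M (z s)‖^2
        + (1/(2*ρ)) * (∫ u in s..(s + i*δ), ‖g u‖^2) + i*(3*K^2*δ^2) := by
      intro i hi
      induction i with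
      | zero => simp
      | succ j ih =>
        have hj : j ≤ n := le_trans (Nat.le_succ j) hi
        have hja : s ≤ s + j*δ := by
          have := mul_nonneg (Nat.cast_nonneg (α := ℝ) j) hδ.le
          linarith
        have hjb : s + j*δ < s + (j+1)*δ := by push_cast; nlinarith [hδ]
        have hjt : s + ((j:ℕ)+1:ℕ)*δ ≤ t := hu_mem (j+1) hi
        have hjt' : s + ((j:ℝ)+1)*δ ≤ t := by push_cast at hjt ⊢; exact hjt
        have hstep := step (s + j*δ) (s + (j+1:ℝ)*δ) hja (by push_cast at hjb ⊢; linarith) hjt'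
        have ihj := ih hj
        have hlen : (s + ((j:ℝ)+1)*δ) - (s + j*δ) = δ := by ring
        have hadd : (∫ u in s..(s + j*δ), ‖g u‖^2) + (∫ u in (s + j*δ)..(s + ((j:ℝ)+1)*δ), ‖g u‖^2)
            = ∫ u in s..(s + ((j:ℝ)+1)*δ), ‖g u‖^2 := by
          apply intervalIntegral.integral_add_adjacent_intervals
          · exact hgint s (s + j*δ) le_rfl (by linarith) (hu_mem j hj)
          · exact hgint (s + j*δ) (s + ((j:ℝ)+1)*δ) (by linarith) (by linarith) hjt'
        have hρ2 : 0 < 1/(2*ρ) := by positivity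
        push_cast
        push_cast at hstep ihj
        rw [hlen] at hstep
        rw [← hadd]
        nlinarith [hstep, ihj, hρ2]
    have hfin := claim n le_rfl
    have hnt : s + n*δ = t := by rw [hδdef]; field_simp; ring
    rw [hnt] at hfin
    have : (n:ℝ)*(3*K^2*δ^2) = 3*K^2*(t-s)^2/n := by
      rw [hδdef]; field_simp
    linarith [hfin, this.le, this.ge]
  have hlim : Tendsto (fun n : ℕ => ‖M (z s)‖^2 + (1/(2*ρ)) * (∫ u in s..t, ‖g u‖^2)
      + 3*K^2*(t-s)^2 / n) atTop
      (𝓝 (‖M (z s)‖^2 + (1/(2*ρ)) * (∫ u in s..t, ‖g u‖^2) + 0)) :=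
    (tendsto_const_nhds.add (tendsto_const_div_atTop_nhds_zero_nat _))
  rw [add_zero] at hlim
  exact ge_of_tendsto hlim (by filter_upwards [eventually_gt_atTop 0] with n hn using main n hn)

lemma aux_clusterPt_comap {α X : Type*} [TopologicalSpace X] {l : Filter α} {u : α → X} {x : X}
    (h : ClusterPt x (Filter.map u l)) : Filter.NeBot (l ⊓ Filter.comap u (𝓝 x)) := by
  rw [Filter.inf_neBot_iff]
  intro S hS T hT
  rcases Filter.mem_comap.1 hT with ⟨V, hV, hVT⟩
  have h2 := Filter.inf_neBot_iff.1 h.neBot hV (show u '' S ∈ Filter.map u l from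
    Filter.mem_map.2 (Filter.mem_of_superset hS (subset_preimage_image u S)))
  rcases h2 with ⟨y, hyV, a, haS, rfl⟩
  exact ⟨a, haS, hVT hyV⟩

section Main
variable {H : Type*} [NormedAddCommGroup H] [InnerProductSpace ℝ H] [CompleteSpace H]
    (M : H → H) (ρ : ℝ) (hρ : 0 < ρ)
    (hco : ∀ x y : H, ρ * ‖M x - M y‖ ^ 2 ≤ ⟪M x - M y, x - y⟫)
    (t0 : ℝ) (ht0 : 0 < t0)
    (z z' g : ℝ → H)
    (hz : ∀ t ∈ Ici t0, HasDerivAt z (z' t) t)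
    (hz'cont : ContinuousOn z' (Ici t0))
    (heq : ∀ t ∈ Ici t0, z' t + M (z t) = g t)
    (hg1 : IntegrableOn (fun t => ‖g t‖) (Ici t0))
    (hg2 : IntegrableOn (fun t => t * ‖g t‖ ^ 2) (Ici t0))

omit [CompleteSpace H] in
include hρ hco in
lemma aux_lip' (x y : H) : ρ * ‖M x - M y‖ ≤ ‖x - y‖ := by
  rcases eq_or_ne (M x) (M y) with h | h
  · simp [h, norm_nonneg]
  · have h0 : 0 < ‖M x - M y‖ := by rw [norm_pos_iff, sub_ne_zero]; exact h
    have := (hco x y).trans (real_inner_le_norm _ _)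
    rw [pow_two] at this
    nlinarith [this, h0]

omit [CompleteSpace H] in
include hρ hco in
lemma aux_Mcont : Continuous M := by
  have : LipschitzWith (Real.toNNReal ρ⁻¹) M := by
    apply LipschitzWith.of_dist_le_mul
    intro x y
    rw [dist_eq_norm, dist_eq_norm, Real.coe_toNNReal _ (inv_nonneg.2 hρ.le)]
    have h := aux_lip' M ρ hρ hco x y
    rw [inv_mul_eq_div, le_div_iff₀ hρ]
    nlinarith [h]
  exact this.continuous

omit [CompleteSpace H] in
include hz in
lemma aux_zc : ContinuousOn z (Ici t0) :=
  fun u hu => (hz u hu).continuousAt.continuousWithinAt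

omit [CompleteSpace H] in
include hρ hco hz in
lemma aux_wc : ContinuousOn (fun u => M (z u)) (Ici t0) :=
  (aux_Mcont M ρ hρ hco).comp_continuousOn (aux_zc t0 z z' hz)

omit [CompleteSpace H] in
include hρ hco hz hz'cont heq in
lemma aux_gc : ContinuousOn g (Ici t0) :=
  (hz'cont.add (aux_wc M ρ hρ hco t0 z z' hz)).congr fun u hu => (heq u hu).symm

include hρ hco hz hz'cont heq in
lemma aux_q_ftc (xs : H) {a b : ℝ} (ha : t0 ≤ a) (hab : a ≤ b) :
    ‖z b - xs‖^2 - ‖z a - xs‖^2 = ∫ u in a..b, 2*⟪z' u, z u - xs⟫ := by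
  have hzc := aux_zc t0 z z' hz
  have hderiv : ∀ u ∈ uIcc a b, HasDerivAt (fun v => ‖z v - xs‖^2) (2*⟪z' u, z u - xs⟫) u := by
    intro u hu
    rw [uIcc_of_le hab] at hu
    have hu' : u ∈ Ici t0 := le_trans ha hu.1
    have h1 : HasDerivAt (fun v => z v - xs) (z' u) u := (hz u hu').sub_const xs
    have h2 := HasDerivAt.inner ℝ h1 h1
    have heqfun : (fun v => ‖z v - xs‖^2) = fun v => ⟪z v - xs, z v - xs⟫ := by
      funext v; rw [real_inner_self_eq_norm_sq]
    rw [heqfun]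
    exact h2.congr_deriv (by rw [real_inner_comm]; ring)
  have hint : IntervalIntegrable (fun u => 2*⟪z' u, z u - xs⟫) volume a b := by
    apply ContinuousOn.intervalIntegrable
    have : ContinuousOn (fun u => 2*⟪z' u, z u - xs⟫) (Ici t0) :=
      continuousOn_const.mul (hz'cont.inner (hzc.sub continuousOn_const))
    exact this.mono (by rw [uIcc_of_le hab]; exact fun u hu => le_trans ha hu.1)
  rw [intervalIntegral.integral_eq_sub_of_hasDerivAt hderiv hint]

omit [CompleteSpace H] in
include hρ hco heq in
lemma aux_qd_le (xs : H) (hxs : M xs = 0) {u : ℝ} (hu : u ∈ Ici t0) :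
    2*⟪z' u, z u - xs⟫ ≤ 2*(‖g u‖*‖z u - xs‖) - 2*ρ*‖M (z u)‖^2 := by
  have hz'eq : z' u = g u - M (z u) := eq_sub_of_add_eq (heq u hu)
  have hsplit : ⟪z' u, z u - xs⟫ = ⟪g u, z u - xs⟫ - ⟪M (z u), z u - xs⟫ := by
    rw [hz'eq, inner_sub_left]
  have hco' : ρ*‖M (z u)‖^2 ≤ ⟪M (z u), z u - xs⟫ := by
    have h := hco (z u) xs
    rwa [hxs, sub_zero] at h
  have hcs : ⟪g u, z u - xs⟫ ≤ ‖g u‖*‖z u - xs‖ := real_inner_le_norm _ _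
  linarith [hsplit, hco', hcs]

omit ht0 hg2 in
include hρ hco hz hz'cont heq hg1 in
lemma aux_qd_int (xs : H) {a b : ℝ} (ha : t0 ≤ a) (hab : a ≤ b) :
    IntervalIntegrable (fun u => 2*⟪z' u, z u - xs⟫) volume a b := by
  apply ContinuousOn.intervalIntegrable
  have : ContinuousOn (fun u => 2*⟪z' u, z u - xs⟫) (Ici t0) :=
    continuousOn_const.mul (hz'cont.inner ((aux_zc t0 z z' hz).sub continuousOn_const))
  exact this.mono (by rw [uIcc_of_le hab]; exact fun u hu => le_trans ha hu.1)

omit ht0 hg2 in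
include hρ hco hz hz'cont heq hg1 in
lemma aux_gn_int {a b : ℝ} (ha : t0 ≤ a) (hab : a ≤ b) :
    IntervalIntegrable (fun u => ‖g u‖) volume a b := by
  apply ContinuousOn.intervalIntegrable
  exact ((aux_gc M ρ hρ hco t0 z z' g hz hz'cont heq).norm).mono
    (by rw [uIcc_of_le hab]; exact fun u hu => le_trans ha hu.1)

omit ht0 hg2 in
include hρ hco hz hz'cont heq hg1 in
lemma aux_ivg_le_Ig {a b : ℝ} (ha : t0 ≤ a) (hab : a ≤ b) :
    (∫ u in a..b, ‖g u‖) ≤ ∫ u in Ici t0, ‖g u‖ := by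
  rw [intervalIntegral.integral_of_le hab]
  apply setIntegral_mono_set hg1 (ae_of_all _ fun u => norm_nonneg _)
  exact HasSubset.Subset.eventuallyLE (fun u hu => le_trans ha hu.1.le)

omit ht0 hg2 in
include hρ hco hz hz'cont heq hg1 in
lemma aux_bound (xs : H) (hxs : M xs = 0) {t : ℝ} (ht : t0 ≤ t) :
    ‖z t - xs‖ ≤ ‖z t0 - xs‖ + 2*∫ u in Ici t0, ‖g u‖ := by
  have hzc := aux_zc t0 z z' hz
  obtain ⟨Ig, hIgdef⟩ : ∃ I : ℝ, I = ∫ u in Ici t0, ‖g u‖ := ⟨_, rfl⟩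
  have hIg0 : 0 ≤ Ig := hIgdef ▸ setIntegral_nonneg measurableSet_Ici (fun u _ => norm_nonneg _)
  rw [← hIgdef]
  obtain ⟨t1, ht1mem, ht1max⟩ := isCompact_Icc.exists_isMaxOn (nonempty_Icc.2 ht)
    (((hzc.mono Icc_subset_Ici_self).sub continuousOn_const).norm)
  obtain ⟨A, hAdef⟩ : ∃ A : ℝ, A = ‖z t1 - xs‖ := ⟨_, rfl⟩
  have hA0 : 0 ≤ A := hAdef ▸ norm_nonneg _
  have hAmax : ∀ u ∈ Icc t0 t, ‖z u - xs‖ ≤ A := fun u hu => hAdef ▸ ht1max hu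
  have hqe := aux_q_ftc M ρ hρ hco t0 z z' g hz hz'cont heq xs le_rfl ht1mem.1
  have hmono : (∫ u in t0..t1, 2*⟪z' u, z u - xs⟫) ≤ ∫ u in t0..t1, (2*A)*‖g u‖ := by
    apply intervalIntegral.integral_mono_on ht1mem.1
      (aux_qd_int M ρ hρ hco t0 z z' g hz hz'cont heq hg1 xs le_rfl ht1mem.1)
      ((aux_gn_int M ρ hρ hco t0 z z' g hz hz'cont heq hg1 le_rfl ht1mem.1).const_mul _)
    intro u hu
    have h1 := aux_qd_le M ρ hρ hco t0 z z' g heq xs hxs (show u ∈ Ici t0 from hu.1)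
    have h2 : ‖z u - xs‖ ≤ A := hAmax u ⟨hu.1, le_trans hu.2 ht1mem.2⟩
    have h3 : 0 ≤ ‖g u‖ := norm_nonneg _
    nlinarith [sq_nonneg ‖M (z u)‖, mul_le_mul_of_nonneg_left h2 h3]
  rw [show (∫ u in t0..t1, (2*A)*‖g u‖) = (2*A)*∫ u in t0..t1, ‖g u‖ from
    intervalIntegral.integral_const_mul _ _] at hmono
  have hIle : (∫ u in t0..t1, ‖g u‖) ≤ Ig := hIgdef ▸
    aux_ivg_le_Ig M ρ hρ hco t0 z z' g hz hz'cont heq hg1 le_rfl ht1mem.1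
  have hA2 : A^2 - ‖z t0 - xs‖^2 ≤ 2*A*Ig := by
    have : (2*A)*(∫ u in t0..t1, ‖g u‖) ≤ (2*A)*Ig :=
      mul_le_mul_of_nonneg_left hIle (by linarith)
    calc A^2 - ‖z t0 - xs‖^2 = ‖z t1 - xs‖^2 - ‖z t0 - xs‖^2 := by rw [hAdef]
      _ = ∫ u in t0..t1, 2*⟪z' u, z u - xs⟫ := hqe
      _ ≤ (2*A)*(∫ u in t0..t1, ‖g u‖) := hmono
      _ ≤ 2*A*Ig := this
  have hAle : A ≤ ‖z t0 - xs‖ + 2*Ig := by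
    by_contra hcon
    push_neg at hcon
    have ha0 : 0 ≤ ‖z t0 - xs‖ := norm_nonneg _
    have hApos : 0 < A := by linarith
    nlinarith [mul_pos (show 0 < A - ‖z t0 - xs‖ - 2*Ig by linarith) hApos,
      mul_le_mul_of_nonneg_left (show ‖z t0 - xs‖ ≤ A by linarith) ha0]
  exact le_trans (hAmax t ⟨ht, le_rfl⟩) hAle


omit ht0 hg1 in
include hρ hco hz hz'cont heq ht0 hg2 in
lemma aux_gsq_int : IntegrableOn (fun u => ‖g u‖^2) (Ici t0) := by
  have hgc := aux_gc M ρ hρ hco t0 z z' g hz hz'cont heq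
  have hmeas : AEStronglyMeasurable (fun u => ‖g u‖^2) (volume.restrict (Ici t0)) :=
    (hgc.norm.pow 2).aestronglyMeasurable measurableSet_Ici
  refine Integrable.mono' (hg2.const_mul (1/t0)) hmeas ?_
  refine (ae_restrict_iff' measurableSet_Ici).2 (ae_of_all _ fun u hu => ?_)
  rw [Real.norm_eq_abs, abs_of_nonneg (by positivity)]
  have hu' : t0 ≤ u := hu
  have h1 : t0 * ‖g u‖^2 ≤ u * ‖g u‖^2 := mul_le_mul_of_nonneg_right hu' (by positivity)
  have h2 : ‖g u‖^2 = (1/t0) * (t0 * ‖g u‖^2) := by field_simp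
  have h3 : (1/t0) * (t0 * ‖g u‖^2) ≤ (1/t0) * (u * ‖g u‖^2) :=
    mul_le_mul_of_nonneg_left h1 (by positivity)
  linarith

omit hg2 in
include hρ hco hz hz'cont heq ht0 hg1 in
lemma aux_hS_w2int (x0 : H) (hx0 : M x0 = 0) :
    IntegrableOn (fun u => ‖M (z u)‖^2) (Ici t0) := by
  have hwc := aux_wc M ρ hρ hco t0 z z' hz
  obtain ⟨Ig, hIgdef⟩ : ∃ I : ℝ, I = ∫ u in Ici t0, ‖g u‖ := ⟨_, rfl⟩
  have hIg0 : 0 ≤ Ig := hIgdef ▸ setIntegral_nonneg measurableSet_Ici (fun u _ => norm_nonneg _)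
  obtain ⟨C, hCdef⟩ : ∃ C : ℝ, C = ‖z t0 - x0‖ + 2*Ig := ⟨_, rfl⟩
  have hCb : ∀ u ∈ Ici t0, ‖z u - x0‖ ≤ C := by
    intro u hu
    rw [hCdef, hIgdef]
    exact aux_bound M ρ hρ hco t0 z z' g hz hz'cont heq hg1 x0 hx0 hu
  have hC0 : 0 ≤ C := le_trans (norm_nonneg _) (hCb t0 (mem_Ici.2 le_rfl))
  rw [integrableOn_Ici_iff_integrableOn_Ioi]
  apply integrableOn_Ioi_of_intervalIntegral_norm_bounded
    ((2*C*Ig + ‖z t0 - x0‖^2)/(2*ρ)) t0 (b := fun i : ℝ => i) (l := atTop) _ tendsto_id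
  · filter_upwards [eventually_ge_atTop t0] with i hi
    have hinteq : (∫ u in t0..i, ‖(fun u => ‖M (z u)‖^2) u‖) = ∫ u in t0..i, ‖M (z u)‖^2 := by
      apply intervalIntegral.integral_congr
      intro u hu
      simp only [Real.norm_eq_abs]
      exact abs_of_nonneg (sq_nonneg _)
    rw [hinteq]
    -- bound the integral of 2ρ‖w‖²
    have hw2ii : ∀ a b, t0 ≤ a → a ≤ b → IntervalIntegrable (fun u => ‖M (z u)‖^2) volume a b := by
      intro a b ha hab
      apply ContinuousOn.intervalIntegrable
      exact ((hwc.norm.pow 2)).mono (by rw [uIcc_of_le hab]; exact fun u hu => le_trans ha hu.1)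
    have hmix : IntervalIntegrable (fun u => (2*C)*‖g u‖ - 2*⟪z' u, z u - x0⟫) volume t0 i :=
      ((aux_gn_int M ρ hρ hco t0 z z' g hz hz'cont heq hg1 le_rfl hi).const_mul _).sub
        (aux_qd_int M ρ hρ hco t0 z z' g hz hz'cont heq hg1 x0 le_rfl hi)
    have hmono := intervalIntegral.integral_mono_on hi
      (((hw2ii t0 i le_rfl hi).const_mul (2*ρ))) hmix ?_
    · rw [show (∫ u in t0..i, (2*ρ)*‖M (z u)‖^2) = (2*ρ)*∫ u in t0..i, ‖M (z u)‖^2 from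
        intervalIntegral.integral_const_mul _ _] at hmono
      rw [intervalIntegral.integral_sub
        ((aux_gn_int M ρ hρ hco t0 z z' g hz hz'cont heq hg1 le_rfl hi).const_mul _)
        (aux_qd_int M ρ hρ hco t0 z z' g hz hz'cont heq hg1 x0 le_rfl hi),
        show (∫ u in t0..i, (2*C)*‖g u‖) = (2*C)*∫ u in t0..i, ‖g u‖ from
        intervalIntegral.integral_const_mul _ _,
        ← aux_q_ftc M ρ hρ hco t0 z z' g hz hz'cont heq x0 le_rfl hi] at hmono
      have hIle : (∫ u in t0..i, ‖g u‖) ≤ Ig := hIgdef ▸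
        aux_ivg_le_Ig M ρ hρ hco t0 z z' g hz hz'cont heq hg1 le_rfl hi
      have hq0 : 0 ≤ ‖z i - x0‖^2 := sq_nonneg _
      have h2C : (2*C)*(∫ u in t0..i, ‖g u‖) ≤ 2*C*Ig :=
        mul_le_mul_of_nonneg_left hIle (by linarith)
      rw [le_div_iff₀ (by positivity : (0:ℝ) < 2*ρ)]
      nlinarith [hmono, h2C, hq0]
    · intro u hu
      have h1 := aux_qd_le M ρ hρ hco t0 z z' g heq x0 hx0 (show u ∈ Ici t0 from hu.1)
      have h2 := hCb u hu.1
      have h3 : 0 ≤ ‖g u‖ := norm_nonneg _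
      nlinarith [mul_le_mul_of_nonneg_left h2 h3]
  · intro i
    rcases le_or_gt t0 i with hi | hi
    · exact (((hwc.norm.pow 2)).mono (fun u (hu : u ∈ Icc t0 i) =>
        hu.1)).integrableOn_Icc.mono_set Ioc_subset_Icc_self
    · simp [Ioc_eq_empty (not_lt.2 hi.le)]


-- tail of an integrable function tends to zero
lemma aux_tail {f : ℝ → ℝ} {t0 : ℝ} (hf : IntegrableOn f (Ici t0) volume) :
    Tendsto (fun s => ∫ x in Ici s, f x) atTop (𝓝 0) := by
  have key : ∀ s, t0 ≤ s → (∫ x in Ici s, f x) = (∫ x in Ici t0, f x) - ∫ x in t0..s, f x := by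
    intro s hs
    rw [intervalIntegral.integral_of_le hs, integral_Ici_eq_integral_Ioi,
      integral_Ici_eq_integral_Ioi (x := t0)]
    have hu : Ioi t0 = Ioc t0 s ∪ Ioi s := (Ioc_union_Ioi_eq_Ioi hs).symm
    rw [hu, setIntegral_union (Ioc_disjoint_Ioi le_rfl) measurableSet_Ioi
      (hf.mono_set (by intro x hx; exact le_of_lt hx.1))
      (hf.mono_set (fun x hx => le_trans hs (le_of_lt hx)))]
    ring
  have h1 : Tendsto (fun s => (∫ x in Ici t0, f x) - ∫ x in t0..s, f x) atTop
      (𝓝 ((∫ x in Ici t0, f x) - ∫ x in Ici t0, f x)) := by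
    refine Tendsto.sub tendsto_const_nhds ?_
    have := intervalIntegral_tendsto_integral_Ioi t0
      (hf.mono_set Ioi_subset_Ici_self) (l := atTop) tendsto_id
    rwa [← integral_Ici_eq_integral_Ioi] at this
  rw [sub_self] at h1
  exact h1.congr' (by filter_upwards [eventually_ge_atTop t0] with s hs using (key s hs).symm)

include hρ hco hz hz'cont heq ht0 hg1 hg2 in
lemma aux_rate (x0 : H) (hx0 : M x0 = 0) :
    Tendsto (fun t => t*‖M (z t)‖^2) atTop (𝓝 0) := by
  have hwc := aux_wc M ρ hρ hco t0 z z' hz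
  have hgc := aux_gc M ρ hρ hco t0 z z' g hz hz'cont heq
  have hw2int := aux_hS_w2int M ρ hρ hco t0 ht0 z z' g hz hz'cont heq hg1 x0 hx0
  have hgsq := aux_gsq_int M ρ hρ hco t0 ht0 z z' g hz hz'cont heq hg2
  have hwt := aux_tail hw2int
  have hg2t := aux_tail hg2
  have bound : ∀ t, 2*t0 ≤ t → t*‖M (z t)‖^2 ≤
      2*(∫ u in Ici (t/2), ‖M (z u)‖^2) + (1/ρ)*(∫ u in Ici (t/2), u*‖g u‖^2) := by
    intro t htt
    have h2 : t0 ≤ t/2 := by linarith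
    have hht : t/2 ≤ t := by linarith
    obtain ⟨Tg, hTgdef⟩ : ∃ T : ℝ, T = ∫ u in Ici (t/2), ‖g u‖^2 := ⟨_, rfl⟩
    obtain ⟨Tw, hTwdef⟩ : ∃ T : ℝ, T = ∫ u in Ici (t/2), ‖M (z u)‖^2 := ⟨_, rfl⟩
    obtain ⟨Tg2, hTg2def⟩ : ∃ T : ℝ, T = ∫ u in Ici (t/2), u*‖g u‖^2 := ⟨_, rfl⟩
    have hTg0 : 0 ≤ Tg := hTgdef ▸ setIntegral_nonneg measurableSet_Ici (fun u _ => sq_nonneg _)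
    have hpt : ∀ s ∈ Icc (t/2) t, ‖M (z t)‖^2 ≤ ‖M (z s)‖^2 + (1/(2*ρ))*Tg := by
      intro s hsm
      have hdec := aux_decrease M ρ hρ hco t0 z z' g hz hz'cont heq hgc hwc
        (le_trans h2 hsm.1) hsm.2
      have htail : (∫ u in s..t, ‖g u‖^2) ≤ Tg := by
        rw [hTgdef, intervalIntegral.integral_of_le hsm.2]
        apply setIntegral_mono_set (hgsq.mono_set (fun u (hu : t/2 ≤ u) => le_trans h2 hu))
          (ae_of_all _ fun u => sq_nonneg _)
        exact HasSubset.Subset.eventuallyLE (fun u hu => le_trans hsm.1 hu.1.le)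
      have hc : 0 ≤ 1/(2*ρ) := by positivity
      nlinarith [hdec, mul_le_mul_of_nonneg_left htail hc]
    have hw2ii : IntervalIntegrable (fun u => ‖M (z u)‖^2) volume (t/2) t := by
      apply ContinuousOn.intervalIntegrable
      exact (hwc.norm.pow 2).mono
        (by rw [uIcc_of_le hht]; exact fun u hu => le_trans h2 hu.1)
    have hmono := intervalIntegral.integral_mono_on hht intervalIntegrable_const
      (hw2ii.add intervalIntegrable_const) hpt
    rw [intervalIntegral.integral_const, smul_eq_mul,
      intervalIntegral.integral_add hw2ii intervalIntegrable_const,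
      intervalIntegral.integral_const, smul_eq_mul] at hmono
    have hiw : (∫ u in (t/2)..t, ‖M (z u)‖^2) ≤ Tw := by
      rw [hTwdef, intervalIntegral.integral_of_le hht]
      apply setIntegral_mono_set (hw2int.mono_set (fun u (hu : t/2 ≤ u) => le_trans h2 hu))
        (ae_of_all _ fun u => sq_nonneg _)
      exact HasSubset.Subset.eventuallyLE (fun u hu => hu.1.le)
    have hgg : (t/2)*Tg ≤ Tg2 := by
      rw [hTgdef, hTg2def, ← integral_const_mul]
      apply setIntegral_mono_on
        ((hgsq.mono_set (fun u (hu : t/2 ≤ u) => le_trans h2 hu)).const_mul _)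
        (hg2.mono_set (fun u (hu : t/2 ≤ u) => le_trans h2 hu)) measurableSet_Ici
      intro u hu
      exact mul_le_mul_of_nonneg_right hu (sq_nonneg _)
    have hexp : (t - t/2) = t/2 := by ring
    rw [hexp] at hmono
    have htpos : 0 ≤ t/2 := by linarith
    have hr : 0 ≤ 1/(2*ρ) := by positivity
    -- (t/2)*‖w t‖² ≤ ∫ + (t/2)*((1/2ρ)Tg) ≤ Tw + (1/2ρ)*Tg2
    have hfin : (t/2)*‖M (z t)‖^2 ≤ Tw + (1/(2*ρ))*Tg2 := by
      have h5 : (t/2)*((1/(2*ρ))*Tg) = (1/(2*ρ))*((t/2)*Tg) := by ring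
      nlinarith [hmono, hiw, mul_le_mul_of_nonneg_left hgg hr]
    have : (1/ρ)*Tg2 = 2*((1/(2*ρ))*Tg2) := by field_simp
    rw [← hTwdef, ← hTg2def]
    nlinarith [hfin]
  have hhalf : Tendsto (fun t : ℝ => t/2) atTop atTop :=
    Tendsto.atTop_div_const two_pos tendsto_id
  have upper : Tendsto (fun t => 2*(∫ u in Ici (t/2), ‖M (z u)‖^2)
      + (1/ρ)*(∫ u in Ici (t/2), u*‖g u‖^2)) atTop (𝓝 (2*0 + (1/ρ)*0)) :=
    (((hwt.comp hhalf).const_mul 2)).add ((hg2t.comp hhalf).const_mul (1/ρ))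
  rw [show (2*(0:ℝ) + (1/ρ)*0) = 0 by ring] at upper
  apply squeeze_zero' ?_ ?_ upper
  · filter_upwards [eventually_ge_atTop (0:ℝ)] with t ht
    positivity
  · filter_upwards [eventually_ge_atTop (2*t0)] with t ht using bound t ht

include hρ hco hz hz'cont heq ht0 hg1 hg2 in
lemma aux_w0 (x0 : H) (hx0 : M x0 = 0) :
    Tendsto (fun t => ‖M (z t)‖) atTop (𝓝 0) := by
  have hi := aux_rate M ρ hρ hco t0 ht0 z z' g hz hz'cont heq hg1 hg2 x0 hx0
  have hs : Tendsto (fun t => Real.sqrt (t*‖M (z t)‖^2)) atTop (𝓝 0) := by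
    have := (Real.continuous_sqrt.tendsto' 0 0 (by simp)).comp hi
    exact this
  apply squeeze_zero' (Eventually.of_forall fun t => norm_nonneg _) ?_ hs
  filter_upwards [eventually_ge_atTop (1:ℝ)] with t ht
  rw [Real.sqrt_mul (by linarith), Real.sqrt_sq (norm_nonneg _)]
  nlinarith [Real.one_le_sqrt.2 ht, norm_nonneg (M (z t))]

include hρ hco hz hz'cont heq ht0 hg1 hg2 in
lemma aux_sqrt_rate (x0 : H) (hx0 : M x0 = 0) :
    Tendsto (fun t => Real.sqrt t * ‖M (z t)‖) atTop (𝓝 0) := by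
  have hi := aux_rate M ρ hρ hco t0 ht0 z z' g hz hz'cont heq hg1 hg2 x0 hx0
  have hs : Tendsto (fun t => Real.sqrt (t*‖M (z t)‖^2)) atTop (𝓝 0) :=
    (Real.continuous_sqrt.tendsto' 0 0 (by simp)).comp hi
  apply hs.congr'
  filter_upwards [eventually_ge_atTop (0:ℝ)] with t ht
  rw [Real.sqrt_mul ht, Real.sqrt_sq (norm_nonneg _)]

include hρ hco hz hz'cont heq hg1 in
lemma aux_qlim (xs : H) (hxs : M xs = 0) :
    ∃ L, Tendsto (fun t => ‖z t - xs‖^2) atTop (𝓝 L) := by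
  obtain ⟨Ig, hIgdef⟩ : ∃ I : ℝ, I = ∫ u in Ici t0, ‖g u‖ := ⟨_, rfl⟩
  have hIg0 : 0 ≤ Ig := hIgdef ▸ setIntegral_nonneg measurableSet_Ici (fun u _ => norm_nonneg _)
  obtain ⟨Cx, hCxdef⟩ : ∃ C : ℝ, C = ‖z t0 - xs‖ + 2*Ig := ⟨_, rfl⟩
  have hCb : ∀ u ∈ Ici t0, ‖z u - xs‖ ≤ Cx := by
    intro u hu
    rw [hCxdef, hIgdef]
    exact aux_bound M ρ hρ hco t0 z z' g hz hz'cont heq hg1 xs hxs hu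
  have hC0 : 0 ≤ Cx := le_trans (norm_nonneg _) (hCb t0 (mem_Ici.2 le_rfl))
  set φ : ℝ → ℝ := fun t => ‖z (max t t0) - xs‖^2 - 2*Cx*∫ u in t0..(max t t0), ‖g u‖ with hφ
  have hanti : Antitone φ := by
    intro a b hab
    have ha' : t0 ≤ max a t0 := le_max_right _ _
    have hb' : t0 ≤ max b t0 := le_max_right _ _
    have hab' : max a t0 ≤ max b t0 := max_le_max hab le_rfl
    have hqe := aux_q_ftc M ρ hρ hco t0 z z' g hz hz'cont heq xs ha' hab'
    have hmono : (∫ u in (max a t0)..(max b t0), 2*⟪z' u, z u - xs⟫) ≤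
        ∫ u in (max a t0)..(max b t0), (2*Cx)*‖g u‖ := by
      apply intervalIntegral.integral_mono_on hab'
        (aux_qd_int M ρ hρ hco t0 z z' g hz hz'cont heq hg1 xs ha' hab')
        ((aux_gn_int M ρ hρ hco t0 z z' g hz hz'cont heq hg1 ha' hab').const_mul _)
      intro u hu
      have h1 := aux_qd_le M ρ hρ hco t0 z z' g heq xs hxs
        (show u ∈ Ici t0 from le_trans ha' hu.1)
      have h2 := hCb u (le_trans ha' hu.1)
      have h3 : 0 ≤ ‖g u‖ := norm_nonneg _
      nlinarith [sq_nonneg ‖M (z u)‖, mul_le_mul_of_nonneg_left h2 h3]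
    rw [show (∫ u in (max a t0)..(max b t0), (2*Cx)*‖g u‖)
        = (2*Cx)*∫ u in (max a t0)..(max b t0), ‖g u‖ from
      intervalIntegral.integral_const_mul _ _] at hmono
    have hsub : (∫ u in t0..(max b t0), ‖g u‖) - (∫ u in t0..(max a t0), ‖g u‖)
        = ∫ u in (max a t0)..(max b t0), ‖g u‖ :=
      intervalIntegral.integral_interval_sub_left
        (aux_gn_int M ρ hρ hco t0 z z' g hz hz'cont heq hg1 le_rfl hb')
        (aux_gn_int M ρ hρ hco t0 z z' g hz hz'cont heq hg1 le_rfl ha')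
    simp only [hφ]
    nlinarith [hqe, hmono, hsub]
  have hbdd : BddBelow (range φ) := by
    refine ⟨-(2*Cx*Ig), ?_⟩
    rintro x ⟨t, rfl⟩
    have hb' : t0 ≤ max t t0 := le_max_right _ _
    have h1 : (∫ u in t0..(max t t0), ‖g u‖) ≤ Ig := hIgdef ▸
      aux_ivg_le_Ig M ρ hρ hco t0 z z' g hz hz'cont heq hg1 le_rfl hb'
    have h2 : 0 ≤ ‖z (max t t0) - xs‖^2 := sq_nonneg _
    simp only [hφ]
    nlinarith [mul_le_mul_of_nonneg_left h1 (show (0:ℝ) ≤ 2*Cx by linarith)]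
  have htend := tendsto_atTop_ciInf hanti hbdd
  have hIgt : Tendsto (fun t => ∫ u in t0..t, ‖g u‖) atTop (𝓝 (∫ u in Ioi t0, ‖g u‖)) :=
    intervalIntegral_tendsto_integral_Ioi t0 (hg1.mono_set Ioi_subset_Ici_self) tendsto_id
  refine ⟨(⨅ i, φ i) + 2*Cx*(∫ u in Ioi t0, ‖g u‖), ?_⟩
  have hcomb := htend.add ((hIgt.const_mul (2*Cx)))
  apply hcomb.congr'
  filter_upwards [eventually_ge_atTop t0] with t ht
  simp only [hφ]
  rw [max_eq_left ht]
  ring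


theorem cocoercive_perturbed_dynamics_convergence'
    (hS : ∃ x, M x = 0)
    (hρ : 0 < ρ)
    (hco : ∀ x y : H, ρ * ‖M x - M y‖ ^ 2 ≤ ⟪M x - M y, x - y⟫)
    (ht0 : 0 < t0)
    (hz : ∀ t ∈ Ici t0, HasDerivAt z (z' t) t)
    (hz'cont : ContinuousOn z' (Ici t0))
    (heq : ∀ t ∈ Ici t0, z' t + M (z t) = g t)
    (hg1 : IntegrableOn (fun t => ‖g t‖) (Ici t0))
    (hg2 : IntegrableOn (fun t => t * ‖g t‖ ^ 2) (Ici t0)) :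
    Tendsto (fun t => Real.sqrt t * ‖M (z t)‖) atTop (nhds 0) ∧
    IntegrableOn (fun t => ‖M (z t)‖ ^ 2) (Ici t0) ∧
    ∃ xstar : H, M xstar = 0 ∧
      ∀ v : H, Tendsto (fun t => ⟪z t - xstar, v⟫) atTop (nhds 0) := by
  obtain ⟨x0, hx0⟩ := hS
  refine ⟨aux_sqrt_rate M ρ hρ hco t0 ht0 z z' g hz hz'cont heq hg1 hg2 x0 hx0,
    aux_hS_w2int M ρ hρ hco t0 ht0 z z' g hz hz'cont heq hg1 x0 hx0, ?_⟩
  have hw0 := aux_w0 M ρ hρ hco t0 ht0 z z' g hz hz'cont heq hg1 hg2 x0 hx0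
  obtain ⟨Ig, hIgdef⟩ : ∃ I : ℝ, I = ∫ u in Ici t0, ‖g u‖ := ⟨_, rfl⟩
  obtain ⟨C, hCdef⟩ : ∃ C : ℝ, C = ‖z t0 - x0‖ + 2*Ig := ⟨_, rfl⟩
  have hCb : ∀ u ∈ Ici t0, ‖z u - x0‖ ≤ C := by
    intro u hu
    rw [hCdef, hIgdef]
    exact aux_bound M ρ hρ hco t0 z z' g hz hz'cont heq hg1 x0 hx0 hu
  -- weak-* setup
  obtain ⟨D, hDdef⟩ : ∃ D, D = InnerProductSpace.toDual ℝ H := ⟨_, rfl⟩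
  obtain ⟨Φ, hΦdef⟩ : ∃ Φ : ℝ → WeakDual ℝ H,
      Φ = fun t => StrongDual.toWeakDual (D (z t)) := ⟨_, rfl⟩
  have hΦapp : ∀ t v, Φ t v = ⟪z t, v⟫ := by
    intro t v
    rw [hΦdef, hDdef]
    exact InnerProductSpace.toDual_apply_apply
  obtain ⟨r, hrdef⟩ : ∃ r : ℝ, r = C + ‖x0‖ := ⟨_, rfl⟩
  obtain ⟨K', hK'def⟩ : ∃ K' : Set (WeakDual ℝ H),
      K' = WeakDual.toStrongDual ⁻¹' Metric.closedBall 0 r := ⟨_, rfl⟩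
  have hK'cpt : IsCompact K' := hK'def ▸ WeakDual.isCompact_closedBall (𝕜 := ℝ) (E := H) 0 r
  have hmem : ∀ t, t0 ≤ t → Φ t ∈ K' := by
    intro t ht
    rw [hK'def]
    simp only [mem_preimage, Metric.mem_closedBall, dist_zero_right]
    have h1 : WeakDual.toStrongDual (Φ t) = D (z t) := by rw [hΦdef]; rfl
    rw [h1, hDdef]
    rw [(InnerProductSpace.toDual ℝ H).norm_map]
    calc ‖z t‖ = ‖(z t - x0) + x0‖ := by rw [show z t - x0 + x0 = z t from by abel]
      _ ≤ ‖z t - x0‖ + ‖x0‖ := norm_add_le _ _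
      _ ≤ C + ‖x0‖ := by linarith [hCb t ht]
      _ = r := hrdef.symm
  have hle : map Φ atTop ≤ 𝓟 K' := by
    rw [le_principal_iff, mem_map]
    exact mem_of_superset (Ici_mem_atTop t0) (fun t ht => hmem t ht)
  obtain ⟨xbar, hxbardef⟩ : ∃ xb : WeakDual ℝ H → H,
      xb = fun y => D.symm (WeakDual.toStrongDual y) := ⟨_, rfl⟩
  have hyval : ∀ y : WeakDual ℝ H, ∀ v, y v = ⟪xbar y, v⟫ := by
    intro y v
    have h1 : D (xbar y) = WeakDual.toStrongDual y := by
      simp only [hxbardef, hDdef]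
      exact (InnerProductSpace.toDual ℝ H).apply_symm_apply _
    calc y v = (WeakDual.toStrongDual y) v := rfl
      _ = D (xbar y) v := by rw [h1]
      _ = ⟪xbar y, v⟫ := by rw [hDdef]; exact InnerProductSpace.toDual_apply_apply
  -- weak convergence along cluster filters
  have hweak : ∀ (y : WeakDual ℝ H) (F : Filter ℝ), ClusterPt y (map Φ F) →
      ∀ v, Tendsto (fun t => ⟪z t, v⟫) (F ⊓ comap Φ (𝓝 y)) (𝓝 ⟪xbar y, v⟫) := by
    intro y F hy v
    have hGΦ : Tendsto Φ (F ⊓ comap Φ (𝓝 y)) (𝓝 y) := tendsto_comap.mono_left inf_le_right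
    have hev := ((WeakDual.eval_continuous v).tendsto y).comp hGΦ
    have : (fun t => (Φ t) v) = fun t => ⟪z t, v⟫ := funext (fun t => hΦapp t v)
    rw [← hyval y v, ← this]
    exact hev
  -- every cluster point of the trajectory is a zero of M
  have hzero : ∀ y : WeakDual ℝ H, ClusterPt y (map Φ atTop) → M (xbar y) = 0 := by
    intro y hy
    haveI hG : NeBot (atTop ⊓ comap Φ (𝓝 y)) := aux_clusterPt_comap hy
    have hGt : (atTop ⊓ comap Φ (𝓝 y)) ≤ atTop := inf_le_left
    have hwG : Tendsto (fun t => M (z t)) (atTop ⊓ comap Φ (𝓝 y)) (𝓝 0) := by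
      rw [tendsto_zero_iff_norm_tendsto_zero]
      exact hw0.mono_left hGt
    have hlhs : Tendsto (fun t => ρ*‖M (z t) - M (xbar y)‖^2) (atTop ⊓ comap Φ (𝓝 y))
        (𝓝 (ρ*‖M (xbar y)‖^2)) := by
      have hc : Continuous (fun w : H => ρ*‖w - M (xbar y)‖^2) := by continuity
      have := (hc.tendsto 0).comp hwG
      simpa [Function.comp_def] using this
    have hrhs : Tendsto (fun t => ⟪M (z t) - M (xbar y), z t - xbar y⟫)
        (atTop ⊓ comap Φ (𝓝 y)) (𝓝 0) := by
      have hT1 : Tendsto (fun t => ⟪M (z t), z t - xbar y⟫) (atTop ⊓ comap Φ (𝓝 y)) (𝓝 0) := by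
        have hb0 : Tendsto (fun t => ‖M (z t)‖ * (C + ‖x0 - xbar y‖)) (atTop ⊓ comap Φ (𝓝 y))
            (𝓝 0) := by
          simpa using (hw0.mono_left hGt).mul_const (C + ‖x0 - xbar y‖)
        apply squeeze_zero_norm' ?_ hb0
        have hIci : Ici t0 ∈ (atTop ⊓ comap Φ (𝓝 y)) := hGt (Ici_mem_atTop t0)
        filter_upwards [hIci] with t ht
        have hb : ‖z t - xbar y‖ ≤ C + ‖x0 - xbar y‖ := by
          calc ‖z t - xbar y‖ = ‖(z t - x0) + (x0 - xbar y)‖ := by abel_nf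
            _ ≤ ‖z t - x0‖ + ‖x0 - xbar y‖ := norm_add_le _ _
            _ ≤ C + ‖x0 - xbar y‖ := by linarith [hCb t ht]
        calc ‖⟪M (z t), z t - xbar y⟫‖ = |⟪M (z t), z t - xbar y⟫| := rfl
          _ ≤ ‖M (z t)‖ * ‖z t - xbar y‖ := abs_real_inner_le_norm _ _
          _ ≤ ‖M (z t)‖ * (C + ‖x0 - xbar y‖) :=
            mul_le_mul_of_nonneg_left hb (norm_nonneg _)
      have hT2 : Tendsto (fun t => ⟪M (xbar y), z t⟫) (atTop ⊓ comap Φ (𝓝 y))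
          (𝓝 ⟪M (xbar y), xbar y⟫) := by
        have := hweak y atTop hy (M (xbar y))
        have he : (fun t => ⟪z t, M (xbar y)⟫) = fun t => ⟪M (xbar y), z t⟫ :=
          funext (fun t => real_inner_comm _ _)
        rw [he] at this
        rw [show ⟪M (xbar y), xbar y⟫ = ⟪xbar y, M (xbar y)⟫ from real_inner_comm _ _]
        exact this
      have hcomb := hT1.sub (hT2.sub (tendsto_const_nhds (x := ⟪M (xbar y), xbar y⟫)))
      rw [show (0:ℝ) - (⟪M (xbar y), xbar y⟫ - ⟪M (xbar y), xbar y⟫) = 0 from by ring] at hcomb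
      apply hcomb.congr
      intro t
      simp only [inner_sub_left, inner_sub_right]
      ring
    have hle0 : ρ*‖M (xbar y)‖^2 ≤ 0 :=
      le_of_tendsto_of_tendsto' hlhs hrhs (fun t => hco (z t) (xbar y))
    have hsq : ‖M (xbar y)‖^2 = 0 := le_antisymm (by nlinarith [hle0]) (sq_nonneg _)
    have := (pow_eq_zero_iff (by norm_num : (2:ℕ) ≠ 0)).1 hsq
    exact norm_eq_zero.1 this
  -- uniqueness of cluster points
  have huniq : ∀ y1 y2 : WeakDual ℝ H, ClusterPt y1 (map Φ atTop) →
      ClusterPt y2 (map Φ atTop) → xbar y1 = xbar y2 := by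
    intro y1 y2 hy1 hy2
    obtain ⟨L1, hL1⟩ := aux_qlim M ρ hρ hco t0 z z' g hz hz'cont heq hg1 (xbar y1) (hzero y1 hy1)
    obtain ⟨L2, hL2⟩ := aux_qlim M ρ hρ hco t0 z z' g hz hz'cont heq hg1 (xbar y2) (hzero y2 hy2)
    have hlim : Tendsto (fun t => ⟪z t, xbar y2 - xbar y1⟫) atTop
        (𝓝 (((L1 - L2) + (‖xbar y2‖^2 - ‖xbar y1‖^2))/2)) := by
      have hcomb := (((hL1.sub hL2).add_const (‖xbar y2‖^2 - ‖xbar y1‖^2)).div_const 2)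
      apply hcomb.congr
      intro t
      rw [inner_sub_right, norm_sub_sq_real, norm_sub_sq_real]
      ring
    have hval : ∀ y : WeakDual ℝ H, ClusterPt y (map Φ atTop) →
        ⟪xbar y, xbar y2 - xbar y1⟫ = ((L1 - L2) + (‖xbar y2‖^2 - ‖xbar y1‖^2))/2 := by
      intro y hy
      haveI hG : NeBot (atTop ⊓ comap Φ (𝓝 y)) := aux_clusterPt_comap hy
      exact tendsto_nhds_unique (hweak y atTop hy (xbar y2 - xbar y1)) (hlim.mono_left inf_le_left)
    have h1 := hval y1 hy1
    have h2 := hval y2 hy2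
    have : ⟪xbar y2 - xbar y1, xbar y2 - xbar y1⟫ = 0 := by
      rw [inner_sub_left, h1, h2]
      ring
    have := inner_self_eq_zero.1 this
    rw [sub_eq_zero] at this
    exact this.symm
  -- extract a cluster point and conclude
  haveI : NeBot (map Φ atTop) := map_neBot
  obtain ⟨y0, hy0K, hy0⟩ := hK'cpt.exists_clusterPt hle
  refine ⟨xbar y0, hzero y0 hy0, ?_⟩
  intro v
  have hgoal : Tendsto (fun t => ⟪z t, v⟫) atTop (𝓝 ⟪xbar y0, v⟫) := by
    by_contra hcon
    rw [Metric.tendsto_atTop] at hcon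
    push_neg at hcon
    obtain ⟨ε, hε, hfreq⟩ := hcon
    have hfreq' : ∃ᶠ t in atTop, t ∈ {t : ℝ | ε ≤ dist ⟪z t, v⟫ ⟪xbar y0, v⟫} := by
      rw [frequently_atTop]
      intro a
      obtain ⟨t, hta, htd⟩ := hfreq a
      exact ⟨t, hta, htd⟩
    have hFne : NeBot (atTop ⊓ 𝓟 {t : ℝ | ε ≤ dist ⟪z t, v⟫ ⟪xbar y0, v⟫}) :=
      frequently_iff_neBot.1 hfreq'
    obtain ⟨F, hFdef⟩ : ∃ F : Filter ℝ, F = atTop ⊓ 𝓟 {t : ℝ | ε ≤ dist ⟪z t, v⟫ ⟪xbar y0, v⟫} :=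
      ⟨_, rfl⟩
    haveI : NeBot F := hFdef ▸ hFne
    have hFle : F ≤ atTop := hFdef ▸ inf_le_left
    have hleF : map Φ F ≤ 𝓟 K' := le_trans (map_mono hFle) hle
    haveI : NeBot (map Φ F) := map_neBot
    obtain ⟨y1, hy1K, hy1⟩ := hK'cpt.exists_clusterPt hleF
    have hy1' : ClusterPt y1 (map Φ atTop) := hy1.mono (map_mono hFle)
    have hxeq : xbar y1 = xbar y0 := huniq y1 y0 hy1' hy0
    haveI hG1 : NeBot (F ⊓ comap Φ (𝓝 y1)) := aux_clusterPt_comap hy1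
    have htend := hweak y1 F hy1 v
    rw [hxeq] at htend
    have hdist : Tendsto (fun t => dist ⟪z t, v⟫ ⟪xbar y0, v⟫) (F ⊓ comap Φ (𝓝 y1)) (𝓝 0) := by
      have := htend.dist (tendsto_const_nhds (x := ⟪xbar y0, v⟫))
      simpa using this
    have hev : ∀ᶠ t in (F ⊓ comap Φ (𝓝 y1)), ε ≤ dist ⟪z t, v⟫ ⟪xbar y0, v⟫ := by
      have hmemF : {t : ℝ | ε ≤ dist ⟪z t, v⟫ ⟪xbar y0, v⟫} ∈ F := by
        rw [hFdef]
        exact mem_inf_of_right (mem_principal_self _)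
      exact Eventually.filter_mono inf_le_left hmemF
    have : ε ≤ 0 := ge_of_tendsto hdist hev
    linarith
  have := hgoal.sub (tendsto_const_nhds (x := ⟪xbar y0, v⟫))
  rw [sub_self] at this
  apply this.congr
  intro t
  rw [inner_sub_left]

end Main


/-- Perturbed dynamics governed by a cocoercive operator: o(1/√t) rate for the operator
norm, square integrability, and weak convergence of the trajectory towards a zero of `M`. -/
theorem cocoercive_perturbed_dynamics_convergence
    {H : Type*} [NormedAddCommGroup H] [InnerProductSpace ℝ H] [CompleteSpace H]
    (M : H → H) (ρ : ℝ) (hρ : 0 < ρ)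
    (hco : ∀ x y : H, ρ * ‖M x - M y‖ ^ 2 ≤ ⟪M x - M y, x - y⟫)
    (hS : ∃ x, M x = 0)
    (t0 : ℝ) (ht0 : 0 < t0)
    (z z' g : ℝ → H)
    (hz : ∀ t ∈ Ici t0, HasDerivAt z (z' t) t)
    (hz'cont : ContinuousOn z' (Ici t0))
    (heq : ∀ t ∈ Ici t0, z' t + M (z t) = g t)
    (hg1 : IntegrableOn (fun t => ‖g t‖) (Ici t0))
    (hg2 : IntegrableOn (fun t => t * ‖g t‖ ^ 2) (Ici t0)) :
    Tendsto (fun t => Real.sqrt t * ‖M (z t)‖) atTop (nhds 0) ∧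
    IntegrableOn (fun t => ‖M (z t)‖ ^ 2) (Ici t0) ∧
    ∃ xstar : H, M xstar = 0 ∧
      ∀ v : H, Tendsto (fun t => ⟪z t - xstar, v⟫) atTop (nhds 0) :=
  cocoercive_perturbed_dynamics_convergence' M ρ t0 z z' g hS hρ hco ht0 hz hz'cont heq hg1 hg2
end
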